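/- arXiv:1902.02736 — 6 statements merged into one kernel-verified Lean document; each statement's English description precedes it below -/
import Mathlib

section
/- Fix a C-sequence ⟨C_α | α < ω₁⟩ on ω₁ satisfying (⋆). Then ρ₁ is coherent modulo finite: for all β < γ < ω₁, ρ₁(α,γ) = ρ₁(α,β) for all but finitely many α < β. -/
noncomputable section
open Ordinal Set

/-- The first uncountable ordinal `ω₁`. -/
def omega1 : Ordinal.{0} := (Cardinal.aleph 1).ord

/-- `IsOtp s o`: the set of ordinals `s` has order type `o`. -/
def IsOtp (s : Set Ordinal.{0}) (o : Ordinal.{0}) : Prop :=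
  Nonempty (s ≃o Set.Iio o)

/-- A C-sequence on `ω₁`: each `C α` is a cofinal subset of `α` (in particular `C 0 = ∅`). -/
def IsCSequence (C : Ordinal.{0} → Set Ordinal.{0}) : Prop :=
  ∀ α, α < omega1 → (∀ ξ ∈ C α, ξ < α) ∧ (∀ ξ, ξ < α → ∃ η ∈ C α, ξ ≤ η)

/-- The condition `(⋆)`: `otp (C α) = cf (α)` for all `α < ω₁`. -/
def StarProperty (C : Ordinal.{0} → Set Ordinal.{0}) : Prop :=
  ∀ α, α < omega1 → IsOtp (C α) (Ordinal.cof α).ord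

/-- `Tr` is the upper trace function of the walk along the C-sequence `C`:
`Tr α α = {α}` and `Tr α β = {β} ∪ Tr α (min (C β \ α))` for `α < β < ω₁`. -/
def IsUpperTrace (C : Ordinal.{0} → Set Ordinal.{0})
    (Tr : Ordinal.{0} → Ordinal.{0} → Finset Ordinal.{0}) : Prop :=
  (∀ α, Tr α α = {α}) ∧
  ∀ α β, α < β → β < omega1 → Tr α β = insert β (Tr α (sInf (C β \ Set.Iio α)))

/-- `IsRho1 C Tr rho1`: `rho1 α β` is the maximum weight
`max {otp (C ξ ∩ α) | ξ ∈ Tr α β \ {α}}`, a natural number under `(⋆)`. -/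
def IsRho1 (C : Ordinal.{0} → Set Ordinal.{0})
    (Tr : Ordinal.{0} → Ordinal.{0} → Finset Ordinal.{0})
    (rho1 : Ordinal.{0} → Ordinal.{0} → ℕ) : Prop :=
  ∀ α β, α < β → β < omega1 →
    IsGreatest {o : Ordinal | ∃ ξ ∈ Tr α β, ξ ≠ α ∧ IsOtp (C ξ ∩ Set.Iio α) o}
      (rho1 α β)

/-- The number-of-steps function `ρ₂ (α, β) = |Tr (α, β)|`, as an integer. -/
def rho2 (Tr : Ordinal.{0} → Ordinal.{0} → Finset Ordinal.{0}) (α β : Ordinal.{0}) : ℤ :=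
  (Tr α β).card

/-! ### Auxiliary lemmas about order types -/

lemma le_emb {o o' : Ordinal.{0}} (f : Set.Iio o ↪o Set.Iio o') :
    ∀ x : Set.Iio o, (x : Ordinal) ≤ (f x : Ordinal) := by
  have key : ∀ a : Ordinal, ∀ x : Set.Iio o, (x : Ordinal) = a → a ≤ (f x : Ordinal) := by
    intro a
    induction a using Ordinal.induction with
    | _ a IH =>
      intro x hx
      by_contra h
      push_neg at h
      have hyo : ((f x : Ordinal)) < o := lt_of_lt_of_le h (hx ▸ x.2.le)
      set y : Set.Iio o := ⟨(f x : Ordinal), hyo⟩ with hy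
      have h1 : (y : Ordinal) ≤ (f y : Ordinal) := IH _ h y rfl
      have hyx : y < x := by
        rw [← Subtype.coe_lt_coe, hx]; exact h
      have h2 : f y < f x := f.strictMono hyx
      rw [← Subtype.coe_lt_coe] at h2
      exact absurd (lt_of_le_of_lt h1 h2) (lt_irrefl _)
  exact fun x => key _ x rfl

lemma ord_le_of_emb {o o' : Ordinal.{0}} (f : Set.Iio o ↪o Set.Iio o') : o ≤ o' := by
  by_contra h
  push_neg at h
  have := le_emb f ⟨o', h⟩
  exact absurd (lt_of_le_of_lt this (f ⟨o', h⟩).2) (lt_irrefl _)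

lemma isOtp_unique {s : Set Ordinal.{0}} {o o' : Ordinal.{0}}
    (h : IsOtp s o) (h' : IsOtp s o') : o = o' := by
  obtain ⟨e⟩ := h; obtain ⟨e'⟩ := h'
  exact le_antisymm (ord_le_of_emb (e.symm.trans e').toOrderEmbedding)
    (ord_le_of_emb (e'.symm.trans e).toOrderEmbedding)

lemma isOtp_mono {s t : Set Ordinal.{0}} {o o' : Ordinal.{0}} (hst : s ⊆ t)
    (h : IsOtp s o) (h' : IsOtp t o') : o ≤ o' := by
  obtain ⟨e⟩ := h; obtain ⟨e'⟩ := h'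
  have incl : s ↪o t :=
    ⟨⟨Set.inclusion hst, Set.inclusion_injective hst⟩, by intro a b; simp [Set.inclusion]⟩
  exact ord_le_of_emb ((e.symm.toOrderEmbedding.trans incl).trans e'.toOrderEmbedding)

lemma isOtp_exists {μ : Ordinal.{0}} {s : Set Ordinal.{0}} (hs : s ⊆ Set.Iio μ) :
    ∃ o, IsOtp s o := by
  classical
  let e := Ordinal.ToType.mk (o := μ)
  let t : Set μ.ToType := {a | (e.symm a : Ordinal) ∈ s}
  let f : s ≃o t :=
    { toFun := fun x => ⟨e ⟨x, hs x.2⟩, by simp [t]⟩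
      invFun := fun a => ⟨(e.symm a : Ordinal), a.2⟩
      left_inv := by intro x; simp
      right_inv := by intro a; simp
      map_rel_iff' := by intro a b; simp [← Subtype.coe_le_coe] }
  let r : t → t → Prop := (· < ·)
  have : IsWellOrder t r := by infer_instance
  let o := Ordinal.type r
  let g := Ordinal.enum r
  let g' : Set.Iio o ≃o t := OrderIso.ofRelIsoLT g
  exact ⟨o, ⟨(f.trans g'.symm)⟩⟩

lemma Iio_nat_sub (n : ℕ) : Set.Iio ((n : ℕ) : Ordinal.{0}) ⊆
    (fun m : ℕ => (m : Ordinal)) '' (Set.Iio n) := by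
  intro x hx
  have hxo : x < Ordinal.omega0 := hx.trans_le (Ordinal.nat_lt_omega0 n).le
  obtain ⟨m, rfl⟩ := Ordinal.lt_omega0.1 hxo
  rw [Set.mem_Iio] at hx
  refine ⟨m, Set.mem_Iio.2 ?_, rfl⟩
  exact_mod_cast hx

lemma Iio_nat_finite (n : ℕ) : (Set.Iio (n : Ordinal.{0})).Finite :=
  ((Set.finite_Iio n).image _).subset (Iio_nat_sub n)

lemma ncard_Iio_nat (n : ℕ) : (Set.Iio (n : Ordinal.{0})).ncard ≤ n := by
  calc (Set.Iio (n : Ordinal.{0})).ncard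
      ≤ ((fun m : ℕ => (m : Ordinal)) '' (Set.Iio n)).ncard :=
        Set.ncard_le_ncard (Iio_nat_sub n) ((Set.finite_Iio n).image _)
    _ ≤ (Set.Iio n).ncard := Set.ncard_image_le (Set.finite_Iio n)
    _ = n := by
        have : (Set.Iio n : Set ℕ) = ↑(Finset.Iio n) := by simp
        rw [this, Set.ncard_coe_finset, Nat.card_Iio]

lemma isOtp_nat_finite {s : Set Ordinal.{0}} {o : Ordinal.{0}} {n : ℕ}
    (h : IsOtp s o) (hn : o ≤ (n : Ordinal)) : s.Finite ∧ s.ncard ≤ n := by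
  obtain ⟨e⟩ := h
  have hsub : Set.Iio o ⊆ Set.Iio (n : Ordinal) := fun x hx => lt_of_lt_of_le hx hn
  have hfin : (Set.Iio o).Finite := (Iio_nat_finite n).subset hsub
  have hsf : s.Finite := by
    rw [← Set.finite_coe_iff]
    rw [← Set.finite_coe_iff] at hfin
    exact Finite.of_equiv _ e.symm.toEquiv
  refine ⟨hsf, ?_⟩
  have hcard : s.ncard = (Set.Iio o).ncard := by
    rw [← Nat.card_coe_set_eq, ← Nat.card_coe_set_eq]
    exact Nat.card_congr e.toEquiv
  rw [hcard]
  exact le_trans (Set.ncard_le_ncard hsub (Iio_nat_finite n)) (ncard_Iio_nat n)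

lemma isOtp_initial_finite {s : Set Ordinal.{0}} {o : Ordinal.{0}}
    (h : IsOtp s o) (ho : o ≤ Ordinal.omega0) {b : Ordinal} (hb : b ∈ s) :
    {x ∈ s | x ≤ b}.Finite := by
  obtain ⟨e⟩ := h
  set N := e ⟨b, hb⟩ with hN
  obtain ⟨n, hn⟩ := Ordinal.lt_omega0.1 (lt_of_lt_of_le N.2 ho)
  have himg : {x ∈ s | x ≤ b} = Subtype.val '' (e ⁻¹' (Set.Iic N)) := by
    ext x
    constructor
    · rintro ⟨hx, hxb⟩
      refine ⟨⟨x, hx⟩, ?_, rfl⟩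
      simp only [Set.mem_preimage, Set.mem_Iic, hN]
      rw [e.le_iff_le]
      exact Subtype.mk_le_mk.2 hxb
    · rintro ⟨y, hy, rfl⟩
      simp only [Set.mem_preimage, Set.mem_Iic, hN] at hy
      rw [e.le_iff_le] at hy
      exact ⟨y.2, hy⟩
  rw [himg]
  apply Set.Finite.image
  apply Set.Finite.preimage e.injective.injOn
  apply Set.Finite.of_finite_image (f := Subtype.val) ?_ Subtype.val_injective.injOn
  apply (Iio_nat_finite (n + 1)).subset
  rintro _ ⟨z, hz, rfl⟩
  have hzN : (z : Ordinal) ≤ (N : Ordinal) := hz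
  rw [hn] at hzN
  refine Set.mem_Iio.2 (lt_of_le_of_lt hzN ?_)
  exact_mod_cast Nat.lt_succ_self n

lemma isOtp_omega0_infinite {s : Set Ordinal.{0}} (h : IsOtp s Ordinal.omega0) :
    s.Infinite := by
  obtain ⟨e⟩ := h
  have hi : (Set.Iio Ordinal.omega0).Infinite :=
    Set.infinite_of_injective_forall_mem (f := fun n : ℕ => (n : Ordinal))
      Nat.cast_injective (fun n => Ordinal.nat_lt_omega0 n)
  rw [← Set.infinite_coe_iff] at hi ⊢
  exact (Equiv.infinite_iff e.toEquiv).2 hi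

lemma isOtp_finite_lt {s : Set Ordinal.{0}} {o : Ordinal.{0}}
    (hf : s.Finite) (h : IsOtp s o) : o < Ordinal.omega0 := by
  by_contra hlt
  push_neg at hlt
  have hi : (Set.Iio o).Infinite :=
    Set.infinite_of_injective_forall_mem (f := fun n : ℕ => (n : Ordinal))
      Nat.cast_injective (fun n => lt_of_lt_of_le (Ordinal.nat_lt_omega0 n) hlt)
  obtain ⟨e⟩ := h
  rw [← Set.infinite_coe_iff] at hi
  have : s.Infinite := Set.infinite_coe_iff.1 ((Equiv.infinite_iff e.toEquiv).2 hi)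
  exact this hf

lemma isOtp_one_eq {s : Set Ordinal.{0}} (h : IsOtp s 1) : ∃ c, s = {c} := by
  obtain ⟨e⟩ := h
  have h0 : (0 : Ordinal) < 1 := zero_lt_one
  refine ⟨(e.symm ⟨0, h0⟩ : Ordinal), ?_⟩
  ext x
  constructor
  · intro hx
    have hex : e ⟨x, hx⟩ = ⟨0, h0⟩ := by
      apply Subtype.ext
      have := (e ⟨x, hx⟩).2
      rw [Set.mem_Iio, Ordinal.lt_one_iff_zero] at this
      exact this
    have := congrArg e.symm hex
    rw [e.symm_apply_apply] at this
    rw [Set.mem_singleton_iff, ← this]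
  · rintro rfl
    exact (e.symm ⟨0, h0⟩).2

/-! ### Cofinality bounds below `ω₁` -/

lemma cof_ord_le_omega0 {γ : Ordinal.{0}} (hγ : γ < omega1) :
    (Ordinal.cof γ).ord ≤ Ordinal.omega0 := by
  have h1 : γ.cof ≤ γ.card := Ordinal.cof_le_card γ
  have h2 : γ.card < Cardinal.aleph 1 := Cardinal.lt_ord.1 hγ
  rw [← Cardinal.succ_aleph0] at h2
  have h3 : γ.cof ≤ Cardinal.aleph0 := le_trans h1 (Order.lt_succ_iff.1 h2)
  calc (Ordinal.cof γ).ord ≤ Cardinal.aleph0.ord := Cardinal.ord_le_ord.2 h3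
    _ = Ordinal.omega0 := Cardinal.ord_aleph0

lemma cof_ord_limit {γ : Ordinal.{0}} (hγ : γ < omega1) (hl : Order.IsSuccLimit γ) :
    (Ordinal.cof γ).ord = Ordinal.omega0 := by
  refine le_antisymm (cof_ord_le_omega0 hγ) ?_
  rw [← Cardinal.ord_aleph0]
  exact Cardinal.ord_le_ord.2 (Ordinal.aleph0_le_cof.2 hl)

/-! ### Structural lemmas about the walk and `ρ₁` -/

section Walk

variable {C : Ordinal.{0} → Set Ordinal.{0}}
  {Tr : Ordinal.{0} → Ordinal.{0} → Finset Ordinal.{0}}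
  {rho1 : Ordinal.{0} → Ordinal.{0} → ℕ}

lemma step_nonempty (hC : IsCSequence C) {α β : Ordinal} (hαβ : α < β) (hβ : β < omega1) :
    (C β \ Set.Iio α).Nonempty := by
  obtain ⟨η, hη, hαη⟩ := (hC β hβ).2 α hαβ
  exact ⟨η, hη, not_lt.2 hαη⟩

lemma otp_le_rho1 (hTr : IsUpperTrace C Tr) (hrho1 : IsRho1 C Tr rho1)
    {α β o : Ordinal} (hαβ : α < β) (hβ : β < omega1)
    (ho : IsOtp (C β ∩ Set.Iio α) o) : o ≤ (rho1 α β : Ordinal) := by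
  apply (hrho1 α β hαβ hβ).2
  refine ⟨β, ?_, hαβ.ne', ho⟩
  rw [hTr.2 α β hαβ hβ]
  exact Finset.mem_insert_self _ _

lemma rho1_step_le (hC : IsCSequence C) (hTr : IsUpperTrace C Tr) (hrho1 : IsRho1 C Tr rho1)
    {α β : Ordinal} (hαβ : α < β) (hβ : β < omega1)
    (hαξ : α < sInf (C β \ Set.Iio α)) :
    rho1 α (sInf (C β \ Set.Iio α)) ≤ rho1 α β := by
  set ξ := sInf (C β \ Set.Iio α) with hξ
  have hξC : ξ ∈ C β := (csInf_mem (step_nonempty hC hαβ hβ)).1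
  have hξβ : ξ < β := (hC β hβ).1 ξ hξC
  have hξω : ξ < omega1 := lt_trans hξβ hβ
  obtain ⟨ζ, hζ, hζα, hζo⟩ := (hrho1 α ξ hαξ hξω).1
  have hle : ((rho1 α ξ : ℕ) : Ordinal) ≤ ((rho1 α β : ℕ) : Ordinal) := by
    apply (hrho1 α β hαβ hβ).2
    refine ⟨ζ, ?_, hζα, hζo⟩
    rw [hTr.2 α β hαβ hβ]
    exact Finset.mem_insert_of_mem hζ
  exact_mod_cast hle

lemma rho1_le_max (hC : IsCSequence C) (hTr : IsUpperTrace C Tr) (hrho1 : IsRho1 C Tr rho1)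
    {α β o₀ : Ordinal} (hαβ : α < β) (hβ : β < omega1)
    (hαξ : α < sInf (C β \ Set.Iio α)) (ho₀ : IsOtp (C β ∩ Set.Iio α) o₀) :
    (rho1 α β : Ordinal) ≤ max o₀ ((rho1 α (sInf (C β \ Set.Iio α)) : ℕ) : Ordinal) := by
  set ξ := sInf (C β \ Set.Iio α) with hξ
  have hξC : ξ ∈ C β := (csInf_mem (step_nonempty hC hαβ hβ)).1
  have hξβ : ξ < β := (hC β hβ).1 ξ hξC
  have hξω : ξ < omega1 := lt_trans hξβ hβ
  obtain ⟨ζ, hζ, hζα, hζo⟩ := (hrho1 α β hαβ hβ).1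
  rw [hTr.2 α β hαβ hβ] at hζ
  rcases Finset.mem_insert.1 hζ with rfl | hζ'
  · rw [isOtp_unique hζo ho₀]
    exact le_max_left _ _
  · refine le_trans ?_ (le_max_right _ _)
    exact (hrho1 α ξ hαξ hξω).2 ⟨ζ, hζ', hζα, hζo⟩

/-! ### The unboundedness lemma (Lemma A) -/

lemma lemA (hC : IsCSequence C) (hstar : StarProperty C) (hTr : IsUpperTrace C Tr)
    (hrho1 : IsRho1 C Tr rho1) :
    ∀ β, β < omega1 → ∀ n : ℕ, {α : Ordinal | α < β ∧ rho1 α β ≤ n}.Finite := by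
  intro β
  induction β using Ordinal.induction with
  | _ β IH =>
    intro hβ n
    rcases Ordinal.zero_or_succ_or_isSuccLimit β with h0 | ⟨δ, rfl⟩ | hlim
    · subst h0
      apply Set.finite_empty.subset
      rintro α ⟨h, -⟩
      exact absurd h (not_lt_of_ge (zero_le (a := α)))
    · -- successor case : C (succ δ) = {δ}
      have hδs : δ < Order.succ δ := Order.lt_succ δ
      have hδ : δ < omega1 := lt_trans hδs hβ
      have hcof : (Ordinal.cof (Order.succ δ)).ord = 1 := by
        rw [Ordinal.cof_succ, Cardinal.ord_one]
      have hsd := hstar _ hβ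
      rw [hcof] at hsd
      obtain ⟨c, hc⟩ := isOtp_one_eq hsd
      have hcδ : c = δ := by
        obtain ⟨η, hη, hδη⟩ := (hC _ hβ).2 δ hδs
        have hηδ : η < Order.succ δ := (hC _ hβ).1 η hη
        rw [hc, Set.mem_singleton_iff] at hη
        subst hη
        exact le_antisymm (Order.lt_succ_iff.1 hηδ) hδη
      rw [hcδ] at hc
      apply Set.Finite.subset ((Set.finite_singleton δ).union (IH δ hδs hδ n))
      rintro α ⟨hα1, hα2⟩
      rcases eq_or_lt_of_le (Order.lt_succ_iff.1 hα1) with rfl | hαδ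
      · exact Or.inl rfl
      · right
        have hdiff : C (Order.succ δ) \ Set.Iio α = {δ} := by
          rw [hc]
          ext x
          simp only [Set.mem_diff, Set.mem_singleton_iff, Set.mem_Iio, not_lt]
          constructor
          · rintro ⟨rfl, -⟩; rfl
          · rintro rfl; exact ⟨rfl, hαδ.le⟩
        have hξ : sInf (C (Order.succ δ) \ Set.Iio α) = δ := by
          rw [hdiff, csInf_singleton]
        have hstep := rho1_step_le hC hTr hrho1 hα1 hβ (by rw [hξ]; exact hαδ)
        rw [hξ] at hstep
        exact ⟨hαδ, le_trans hstep hα2⟩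
    · -- limit case
      have hcof := cof_ord_limit hβ hlim
      have hsb := hstar β hβ
      rw [hcof] at hsb
      have hinf : (C β).Infinite := isOtp_omega0_infinite hsb
      obtain ⟨s', hs'sub, hs'fin, hs'card⟩ := hinf.exists_subset_ncard_eq (n + 1)
      have hs'ne : s'.Nonempty := Set.nonempty_of_ncard_ne_zero (by omega)
      obtain ⟨c, hcs', hcmax⟩ := Set.exists_max_image s' id hs'fin hs'ne
      have hcC : c ∈ C β := hs'sub hcs'
      have hFfin : {x ∈ C β | x ≤ c}.Finite := isOtp_initial_finite hsb le_rfl hcC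
      have hFlt : ∀ x ∈ {x ∈ C β | x ≤ c}, x < β := fun x hx => (hC β hβ).1 x hx.1
      apply Set.Finite.subset
        (hFfin.union (hFfin.biUnion fun x hx =>
          IH x (hFlt x hx) (lt_trans (hFlt x hx) hβ) n))
      rintro α ⟨hαβ', hαn⟩
      have hαc : α ≤ c := by
        by_contra hgt
        push_neg at hgt
        have hsub2 : s' ⊆ C β ∩ Set.Iio α := fun x hx =>
          ⟨hs'sub hx, Set.mem_Iio.2 (lt_of_le_of_lt (hcmax x hx) hgt)⟩
        obtain ⟨o, ho⟩ := isOtp_exists (μ := β)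
          (s := C β ∩ Set.Iio α) (fun x hx => (hC β hβ).1 x hx.1)
        have hon : o ≤ (n : Ordinal) := by
          refine le_trans (otp_le_rho1 hTr hrho1 hαβ' hβ ho) ?_
          exact_mod_cast hαn
        obtain ⟨hfin2, hcard2⟩ := isOtp_nat_finite ho hon
        have hcontra : n + 1 ≤ n := by
          calc n + 1 = s'.ncard := hs'card.symm
            _ ≤ (C β ∩ Set.Iio α).ncard := Set.ncard_le_ncard hsub2 hfin2
            _ ≤ n := hcard2
        omega
      have hne := step_nonempty hC hαβ' hβ
      have hmem := csInf_mem hne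
      have hξαC : sInf (C β \ Set.Iio α) ∈ C β := hmem.1
      have hαξ : α ≤ sInf (C β \ Set.Iio α) := not_lt.1 hmem.2
      have hξc : sInf (C β \ Set.Iio α) ≤ c := csInf_le' ⟨hcC, not_lt.2 hαc⟩
      have hξF : sInf (C β \ Set.Iio α) ∈ {x ∈ C β | x ≤ c} := ⟨hξαC, hξc⟩
      rcases eq_or_lt_of_le hαξ with heq | hlt
      · exact Or.inl (heq ▸ hξF)
      · right
        refine Set.mem_biUnion hξF ?_
        exact ⟨hlt, le_trans (rho1_step_le hC hTr hrho1 hαβ' hβ hlt) hαn⟩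

end Walk

/-- Theorem (coherence of ρ₁): for a C-sequence on ω₁ satisfying (⋆),
`ρ₁(·,γ) ↾ β =* ρ₁(·,β)` for all `β < γ < ω₁`. -/
theorem statement0 (C : Ordinal → Set Ordinal) (hC : IsCSequence C) (hstar : StarProperty C)
    (Tr : Ordinal → Ordinal → Finset Ordinal) (hTr : IsUpperTrace C Tr)
    (rho1 : Ordinal → Ordinal → ℕ) (hrho1 : IsRho1 C Tr rho1) :
    ∀ β γ, β < γ → γ < omega1 →
      {α : Ordinal | α < β ∧ rho1 α γ ≠ rho1 α β}.Finite := by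
  have main : ∀ γ, γ < omega1 → ∀ β, β < γ →
      {α : Ordinal | α < β ∧ rho1 α γ ≠ rho1 α β}.Finite := by
    intro γ
    induction γ using Ordinal.induction with
    | _ γ IH =>
      intro hγ β hβγ
      rcases eq_or_ne β 0 with rfl | hβ0
      · apply Set.finite_empty.subset
        rintro α ⟨h, -⟩
        exact absurd h (not_lt_of_ge (zero_le (a := α)))
      have hβω : β < omega1 := lt_trans hβγ hγ
      have hne := step_nonempty hC hβγ hγ
      have hmem := csInf_mem hne
      have hξC : sInf (C γ \ Set.Iio β) ∈ C γ := hmem.1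
      have hβξ : β ≤ sInf (C γ \ Set.Iio β) := not_lt.1 hmem.2
      have hξγ : sInf (C γ \ Set.Iio β) < γ := (hC γ hγ).1 _ hξC
      set ξ := sInf (C γ \ Set.Iio β) with hξdef
      have hcofle := cof_ord_le_omega0 hγ
      have hsg := hstar γ hγ
      have hFfin : {x ∈ C γ | x ≤ ξ}.Finite := isOtp_initial_finite hsg hcofle hξC
      obtain ⟨om, hom⟩ := isOtp_exists (μ := γ)
        (s := C γ ∩ Set.Iio β) (fun x hx => (hC γ hγ).1 x hx.1)
      have homfin : om < Ordinal.omega0 := by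
        refine isOtp_finite_lt (hFfin.subset ?_) hom
        rintro x ⟨hx1, hx2⟩
        exact ⟨hx1, le_trans (Set.mem_Iio.1 hx2).le hβξ⟩
      obtain ⟨M, hM⟩ := Ordinal.lt_omega0.1 homfin
      have hB : ∀ x ∈ {x ∈ C γ | x ≤ ξ},
          {α : Ordinal | α < β ∧ α < x ∧ rho1 α x ≠ rho1 α β}.Finite := by
        intro x hx
        have hxγ : x < γ := (hC γ hγ).1 x hx.1
        rcases lt_trichotomy x β with hxβ | rfl | hβx
        · apply Set.Finite.subset (IH β hβγ hβω x hxβ)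
          rintro α ⟨-, h2, h3⟩
          exact ⟨h2, h3.symm⟩
        · apply Set.finite_empty.subset
          rintro α ⟨-, -, h3⟩
          exact absurd rfl h3
        · apply Set.Finite.subset (IH x hxγ (lt_trans hxγ hγ) β hβx)
          rintro α ⟨h1, -, h3⟩
          exact ⟨h1, h3⟩
      have hAfin := lemA hC hstar hTr hrho1 β hβω M
      apply Set.Finite.subset (hFfin.union (hAfin.union (hFfin.biUnion hB)))
      rintro α ⟨hαβ, hαne⟩
      by_contra hnotin
      have hnF : α ∉ {x ∈ C γ | x ≤ ξ} := fun h => hnotin (Set.mem_union_left _ h)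
      have hnA : ¬(α < β ∧ rho1 α β ≤ M) := fun h =>
        hnotin (Set.mem_union_right _ (Set.mem_union_left _ h))
      have hnB : ∀ x, x ∈ {x ∈ C γ | x ≤ ξ} →
          ¬(α < β ∧ α < x ∧ rho1 α x ≠ rho1 α β) := fun x hx h =>
        hnotin (Set.mem_union_right _ (Set.mem_union_right _ (Set.mem_biUnion hx h)))
      have hMlt : M < rho1 α β := by
        by_contra hle
        push_neg at hle
        exact hnA ⟨hαβ, hle⟩
      have hαγ : α < γ := lt_trans hαβ hβγ
      have hneα := step_nonempty hC hαγ hγ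
      have hmemα := csInf_mem hneα
      have hξαC : sInf (C γ \ Set.Iio α) ∈ C γ := hmemα.1
      have hαξα : α ≤ sInf (C γ \ Set.Iio α) := not_lt.1 hmemα.2
      have hξαξ : sInf (C γ \ Set.Iio α) ≤ ξ :=
        csInf_le' ⟨hξC, not_lt.2 (le_trans hαβ.le hβξ)⟩
      have hξαF : sInf (C γ \ Set.Iio α) ∈ {x ∈ C γ | x ≤ ξ} := ⟨hξαC, hξαξ⟩
      have hαltξα : α < sInf (C γ \ Set.Iio α) :=
        lt_of_le_of_ne hαξα (fun h => hnF (h ▸ hξαF))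
      have heqstep : rho1 α (sInf (C γ \ Set.Iio α)) = rho1 α β := by
        by_contra hne2
        exact hnB _ hξαF ⟨hαβ, hαltξα, hne2⟩
      obtain ⟨oα, hoα⟩ := isOtp_exists (μ := γ)
        (s := C γ ∩ Set.Iio α) (fun x hx => (hC γ hγ).1 x hx.1)
      have hoαM : oα ≤ (M : Ordinal) := by
        rw [← hM]
        exact isOtp_mono
          (Set.inter_subset_inter_right _ (Set.Iio_subset_Iio hαβ.le)) hoα hom
      have h1 := rho1_le_max hC hTr hrho1 hαγ hγ hαltξα hoα
      have h2 := rho1_step_le hC hTr hrho1 hαγ hγ hαltξα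
      apply hαne
      apply le_antisymm
      · have hord : (rho1 α γ : Ordinal) ≤ ((rho1 α β : ℕ) : Ordinal) := by
          refine le_trans h1 (max_le ?_ ?_)
          · refine le_trans hoαM ?_
            exact_mod_cast hMlt.le
          · rw [heqstep]
        exact_mod_cast hord
      · rw [← heqstep]; exact h2
  intro β γ hβγ hγ
  exact main γ hγ β hβγ
end
end

section
/- Fix a C-sequence ⟨C_α | α < ω₁⟩ on ω₁ satisfying (⋆). Then ρ₁ is nontrivial: there exists no function ρ̃₁ : ω₁ → ℤ such that for every β < ω₁, ρ̃₁(α) = ρ₁(α,β) for all but finitely many α < β. -/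
noncomputable section
open Ordinal Set

/-! ### Auxiliary order-type machinery -/

/-- The order type of a set of ordinals, as an `Ordinal.{1}`. -/
def otpL (s : Set Ordinal.{0}) : Ordinal.{1} :=
  Ordinal.type (Subrel ((· < ·) : Ordinal.{0} → Ordinal.{0} → Prop) (· ∈ s))

lemma otpL_Iio (γ : Ordinal.{0}) : otpL (Set.Iio γ) = Ordinal.lift.{1} γ :=
  (Ordinal.type_subrel _ γ).trans (Ordinal.typein_ordinal γ)

lemma isOtp_iff {s : Set Ordinal.{0}} {o : Ordinal.{0}} :
    IsOtp s o ↔ otpL s = Ordinal.lift.{1} o := by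
  rw [← otpL_Iio, otpL, otpL, Ordinal.type_eq, IsOtp]
  constructor
  · rintro ⟨e⟩; exact ⟨e.toRelIsoLT⟩
  · rintro ⟨e⟩; exact ⟨OrderIso.ofRelIsoLT e⟩

lemma otpL_mono {s t : Set Ordinal.{0}} (h : s ⊆ t) : otpL s ≤ otpL t := by
  rw [otpL, otpL, Ordinal.type_le_iff']
  exact ⟨⟨⟨Set.inclusion h, Set.inclusion_injective h⟩, Iff.rfl⟩⟩

lemma otpL_strictmono {s : Set Ordinal.{0}} {ξ ζ : Ordinal.{0}} (hξ : ξ ∈ s) (h : ξ < ζ) :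
    otpL (s ∩ Set.Iio ξ) < otpL (s ∩ Set.Iio ζ) := by
  refine PrincipalSeg.ordinal_type_lt
    (PrincipalSeg.mk (RelEmbedding.mk ⟨fun a => ⟨a.1, a.2.1, lt_trans a.2.2 h⟩, ?_⟩ ?_)
      ⟨ξ, hξ, h⟩ ?_)
  · intro a b hab
    simpa [Subtype.ext_iff] using hab
  · exact Iff.rfl
  · intro b
    show _ ↔ b.1 < ξ
    constructor
    · rintro ⟨a, rfl⟩
      exact a.2.2
    · intro hb
      exact ⟨⟨b.1, b.2.1, hb⟩, rfl⟩

lemma exists_isOtp {s : Set Ordinal.{0}} {γ : Ordinal.{0}} (h : s ⊆ Set.Iio γ) :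
    ∃ o, IsOtp s o := by
  have h1 : otpL s ≤ Ordinal.lift.{1} γ := (otpL_Iio γ) ▸ otpL_mono h
  obtain ⟨o, ho⟩ := Ordinal.mem_range_lift_of_le h1
  exact ⟨o, isOtp_iff.2 ho.symm⟩

lemma finite_Iic_nat (n : ℕ) : (Set.Iic (n : Ordinal.{u})).Finite := by
  refine Set.Finite.subset ((Set.finite_Iic n).image (Nat.cast)) ?_
  intro o ho
  obtain ⟨m, rfl⟩ := Ordinal.lt_omega0.1 (lt_of_le_of_lt ho (Ordinal.nat_lt_omega0 n))
  have hmn : (m : Ordinal.{u}) ≤ (n : Ordinal.{u}) := ho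
  exact ⟨m, Set.mem_Iic.2 (by exact_mod_cast hmn), rfl⟩

/-- Key lemma: the sets `{α < β : ρ₁(α,β) ≤ n}` are finite. -/
lemma rho1_finite_fibers (C : Ordinal → Set Ordinal) (hC : IsCSequence C)
    (Tr : Ordinal → Ordinal → Finset Ordinal) (hTr : IsUpperTrace C Tr)
    (rho1 : Ordinal → Ordinal → ℕ) (hrho1 : IsRho1 C Tr rho1) :
    ∀ β, β < omega1 → ∀ n : ℕ, {α | α < β ∧ rho1 α β ≤ n}.Finite := by
  intro β
  induction β using Ordinal.induction with
  | h β IH =>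
    intro hβ n
    -- the weight bound: otpL (C β ∩ Iio α) ≤ rho1 α β for α < β
    have hweight : ∀ α, α < β → otpL (C β ∩ Set.Iio α) ≤ ((rho1 α β : ℕ) : Ordinal.{1}) := by
      intro α hα
      obtain ⟨o, ho⟩ := exists_isOtp (Set.inter_subset_right : C β ∩ Set.Iio α ⊆ Set.Iio α)
      have hβTr : β ∈ Tr α β := by
        rw [hTr.2 α β hα hβ]; exact Finset.mem_insert_self _ _
      have hole : o ≤ ((rho1 α β : ℕ) : Ordinal.{0}) :=
        (hrho1 α β hα hβ).2 ⟨β, hβTr, (ne_of_gt hα), ho⟩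
      rw [isOtp_iff] at ho
      rw [ho, ← Ordinal.lift_natCast.{1,0} (rho1 α β)]
      exact Ordinal.lift_le.2 hole
    set M : Set Ordinal.{0} := {ξ | ξ ∈ C β ∧ otpL (C β ∩ Set.Iio ξ) ≤ (n : Ordinal.{1})} with hM
    have hMfin : M.Finite := by
      have himfin : ((fun ξ => otpL (C β ∩ Set.Iio ξ)) '' M).Finite := by
        refine (finite_Iic_nat n).subset ?_
        rintro _ ⟨ξ, hξ, rfl⟩
        exact hξ.2
      refine Set.Finite.of_finite_image himfin ?_
      intro ξ hξ ζ hζ heq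
      rcases lt_trichotomy ξ ζ with h | h | h
      · exact absurd heq (otpL_strictmono hξ.1 h).ne
      · exact h
      · exact absurd heq.symm (otpL_strictmono hζ.1 h).ne
    have hMlt : ∀ ξ ∈ M, ξ < β := fun ξ hξ => (hC β hβ).1 ξ hξ.1
    refine Set.Finite.subset
      (hMfin.union (hMfin.biUnion (fun ξ hξ =>
        IH ξ (hMlt ξ hξ) (lt_trans (hMlt ξ hξ) hβ) n))) ?_
    rintro α ⟨hα, hr⟩
    set m := sInf (C β \ Set.Iio α) with hm
    have hne : (C β \ Set.Iio α).Nonempty := by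
      obtain ⟨η, hη, hαη⟩ := (hC β hβ).2 α hα
      exact ⟨η, hη, not_lt.2 hαη⟩
    have hmmem := csInf_mem hne
    have hmC : m ∈ C β := hmmem.1
    have hαm : α ≤ m := not_lt.1 hmmem.2
    have hseteq : C β ∩ Set.Iio m = C β ∩ Set.Iio α := by
      ext ξ
      simp only [Set.mem_inter_iff, Set.mem_Iio]
      constructor
      · rintro ⟨h1, h2⟩
        refine ⟨h1, ?_⟩
        by_contra hcon
        exact absurd h2 (not_lt.2 (csInf_le' ⟨h1, hcon⟩))
      · rintro ⟨h1, h2⟩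
        exact ⟨h1, lt_of_lt_of_le h2 hαm⟩
    have hwn : otpL (C β ∩ Set.Iio α) ≤ (n : Ordinal.{1}) :=
      le_trans (hweight α hα) (by exact_mod_cast Nat.cast_le.2 hr)
    have hmM : m ∈ M := ⟨hmC, by rw [hseteq]; exact hwn⟩
    rcases eq_or_lt_of_le hαm with heq | hlt
    · left
      exact heq ▸ hmM
    · right
      refine Set.mem_biUnion hmM ⟨hlt, ?_⟩
      have hmβ : m < β := (hC β hβ).1 m hmC
      have hmω : m < omega1 := lt_trans hmβ hβ
      obtain ⟨ξ, hξTr, hξne, ho⟩ := (hrho1 α m hlt hmω).1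
      have hξTr' : ξ ∈ Tr α β := by
        rw [hTr.2 α β hα hβ, ← hm]
        exact Finset.mem_insert_of_mem hξTr
      have hle : ((rho1 α m : ℕ) : Ordinal.{0}) ≤ ((rho1 α β : ℕ) : Ordinal.{0}) :=
        (hrho1 α β hα hβ).2 ⟨ξ, hξTr', hξne, ho⟩
      exact le_trans (by exact_mod_cast hle) hr

lemma iio_omega1_not_countable : ¬ (Set.Iio omega1).Countable := by
  intro hcnt
  have h1 : Cardinal.mk (Set.Iio omega1) ≤ Cardinal.aleph0 := hcnt.le_aleph0
  rw [Ordinal.mk_Iio_ordinal, omega1, Cardinal.card_ord, ← Cardinal.lift_aleph0.{1,0},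
    Cardinal.lift_le] at h1
  exact Cardinal.aleph0_lt_aleph_one.not_ge h1

/-- Theorem (nontriviality of ρ₁): for a C-sequence on ω₁ satisfying (⋆), there is no
`ρ̃₁ : ω₁ → ℤ` with `ρ̃₁ ↾ β =* ρ₁(·,β)` for all `β < ω₁`. -/
theorem statement1 (C : Ordinal → Set Ordinal) (hC : IsCSequence C) (hstar : StarProperty C)
    (Tr : Ordinal → Ordinal → Finset Ordinal) (hTr : IsUpperTrace C Tr)
    (rho1 : Ordinal → Ordinal → ℕ) (hrho1 : IsRho1 C Tr rho1) :
    ¬∃ f : Ordinal → ℤ, ∀ β, β < omega1 →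
      {α : Ordinal | α < β ∧ f α ≠ (rho1 α β : ℤ)}.Finite := by
  rintro ⟨f, hf⟩
  have key := rho1_finite_fibers C hC Tr hTr rho1 hrho1
  set A : ℤ → Set Ordinal.{0} := fun k => {α | α < omega1 ∧ f α = k} with hA
  have hAfin : ∀ k : ℤ, ∀ β, β < omega1 → (A k ∩ Set.Iio β).Finite := by
    intro k β hβ
    refine Set.Finite.subset ((hf β hβ).union (key β hβ k.toNat)) ?_
    rintro α ⟨⟨hαω, hfα⟩, hαβ⟩
    by_cases hcase : f α = ((rho1 α β : ℕ) : ℤ)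
    · right
      refine ⟨hαβ, le_of_eq ?_⟩
      have : (k : ℤ) = ((rho1 α β : ℕ) : ℤ) := hfα ▸ hcase
      rw [this]
      exact Int.toNat_natCast _
    · left
      exact ⟨hαβ, hcase⟩
  have hAcnt : ∀ k : ℤ, (A k).Countable := by
    intro k
    rw [Set.countable_iff_exists_injOn]
    refine ⟨fun α => (A k ∩ Set.Iio α).ncard, ?_⟩
    have mono : ∀ x y, x ∈ A k → y ∈ A k → x < y →
        (A k ∩ Set.Iio x).ncard < (A k ∩ Set.Iio y).ncard := by
      intro x y hx hy hxy
      refine Set.ncard_lt_ncard ?_ (hAfin k y hy.1)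
      constructor
      · exact Set.inter_subset_inter_right _ (Set.Iio_subset_Iio hxy.le)
      · intro hsub
        exact absurd (hsub ⟨hx, hxy⟩).2 (lt_irrefl x)
    intro x hx y hy heq
    rcases lt_trichotomy x y with h | h | h
    · exact absurd heq (mono x y hx hy h).ne
    · exact h
    · exact absurd heq.symm (mono y x hy hx h).ne
  have hcover : Set.Iio omega1 ⊆ ⋃ k : ℤ, A k :=
    fun α hα => Set.mem_iUnion.2 ⟨f α, hα, rfl⟩
  exact iio_omega1_not_countable ((Set.countable_iUnion hAcnt).mono hcover)
end
end

section
/- Fix a C-sequence ⟨C_α | α < ω₁⟩ on ω₁ satisfying (⋆). Then ρ₂ is coherent modulo bounded: for all β < γ < ω₁, the function α ↦ ρ₂(α,γ) − ρ₂(α,β) defined on β is bounded, i.e., there is k ∈ ℕ with |ρ₂(α,γ) − ρ₂(α,β)| ≤ k for all α < β. -/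
noncomputable section
open Ordinal Set

section Aux

variable {C : Ordinal.{0} → Set Ordinal.{0}} {Tr : Ordinal.{0} → Ordinal.{0} → Finset Ordinal.{0}}

/-- The first step of the walk from `γ` down towards `α`. -/
lemma minStep (hC : IsCSequence C) {γ α : Ordinal} (hγ : γ < omega1) (h : α < γ) :
    sInf (C γ \ Set.Iio α) ∈ C γ ∧ α ≤ sInf (C γ \ Set.Iio α) ∧ sInf (C γ \ Set.Iio α) < γ := by
  obtain ⟨h1, h2⟩ := hC γ hγ
  obtain ⟨η, hη, hαη⟩ := h2 α h
  have hne : (C γ \ Set.Iio α).Nonempty := ⟨η, hη, not_lt.2 hαη⟩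
  have hmem := csInf_mem hne
  exact ⟨hmem.1, not_lt.1 hmem.2, h1 _ hmem.1⟩

/-- Every element of the trace `Tr α δ` is at most `δ`. -/
lemma trace_le (hC : IsCSequence C) (hTr : IsUpperTrace C Tr) :
    ∀ δ, δ < omega1 → ∀ α, α ≤ δ → ∀ x ∈ Tr α δ, x ≤ δ := by
  intro δ
  induction δ using Ordinal.induction with
  | h δ IH =>
    intro hδ α hα x hx
    rcases eq_or_lt_of_le hα with rfl | hlt
    · rw [hTr.1] at hx
      rw [Finset.mem_singleton.1 hx]
    · rw [hTr.2 α δ hlt hδ] at hx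
      rcases Finset.mem_insert.1 hx with rfl | hx'
      · exact le_rfl
      · obtain ⟨_, hαξ, hξδ⟩ := minStep hC hδ hlt
        exact le_trans (IH _ hξδ (hξδ.trans hδ) α hαξ x hx') hξδ.le

/-- One-step recursion for `ρ₂`. -/
lemma rho2_step (hC : IsCSequence C) (hTr : IsUpperTrace C Tr) {γ α : Ordinal}
    (hγ : γ < omega1) (h : α < γ) :
    rho2 Tr α γ = rho2 Tr α (sInf (C γ \ Set.Iio α)) + 1 := by
  obtain ⟨_, hαξ, hξγ⟩ := minStep hC hγ h
  have hnot : γ ∉ Tr α (sInf (C γ \ Set.Iio α)) := fun hmem =>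
    absurd (trace_le hC hTr _ (hξγ.trans hγ) α hαξ γ hmem) (not_le.2 hξγ)
  rw [rho2, rho2, hTr.2 α γ h hγ, Finset.card_insert_of_notMem hnot]
  push_cast
  ring

/-- Under `(⋆)`, for `β < γ < ω₁` the set `C γ ∩ [0, β)` is finite. -/
lemma finite_inter (hC : IsCSequence C) (hstar : StarProperty C) {γ β : Ordinal}
    (hγ : γ < omega1) (hβ : β < γ) : (C γ ∩ Set.Iio β).Finite := by
  obtain ⟨e⟩ := hstar γ hγ
  have hcof : (Ordinal.cof γ).ord ≤ Ordinal.omega0 := by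
    have h1 : Ordinal.cof γ ≤ γ.card := Ordinal.cof_le_card γ
    have h2 : γ.card < Cardinal.aleph 1 := Cardinal.lt_ord.1 hγ
    have h3 : γ.card ≤ Cardinal.aleph0 := by
      rwa [← Cardinal.succ_aleph0, Order.lt_succ_iff] at h2
    calc (Ordinal.cof γ).ord ≤ Cardinal.aleph0.ord :=
          Cardinal.ord_le_ord.2 (h1.trans h3)
      _ = Ordinal.omega0 := Cardinal.ord_aleph0
  obtain ⟨η, hη, hβη⟩ := (hC γ hγ).2 β hβ
  set m : Ordinal := (e ⟨η, hη⟩ : Ordinal) with hm_def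
  have hm : m < Ordinal.omega0 := lt_of_lt_of_le (e ⟨η, hη⟩).2 hcof
  have hIio : (Set.Iio m).Finite := by
    obtain ⟨n, hn⟩ := Ordinal.lt_omega0.1 hm
    rw [hn]
    have hsub : Set.Iio ((n : ℕ) : Ordinal) ⊆ (fun k : ℕ => (k : Ordinal)) '' Set.Iio n := by
      intro x hx
      have hxω : x < Ordinal.omega0 := hx.trans_le (Ordinal.nat_lt_omega0 n).le
      obtain ⟨k, rfl⟩ := Ordinal.lt_omega0.1 hxω
      exact ⟨k, Set.mem_Iio.2 (by exact_mod_cast Set.mem_Iio.1 hx), rfl⟩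
    exact ((Set.finite_Iio n).image _).subset hsub
  have hsubty : Finite (Set.Iio m) := hIio.to_subtype
  have hfin : Finite ↥(C γ ∩ Set.Iio β) := by
    refine Finite.of_injective (fun x : ↥(C γ ∩ Set.Iio β) =>
      (⟨(e ⟨x.1, x.2.1⟩ : Ordinal), ?_⟩ : Set.Iio m)) ?_
    · have hxη : (⟨x.1, x.2.1⟩ : C γ) < ⟨η, hη⟩ := by
        exact Subtype.mk_lt_mk.2 (lt_of_lt_of_le x.2.2 hβη)
      exact e.lt_iff_lt.2 hxη
    · intro a b hab
      simp only [Subtype.mk.injEq] at hab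
      have hab' : ((e ⟨a.1, a.2.1⟩ : Set.Iio (Ordinal.cof γ).ord) : Ordinal) =
          ((e ⟨b.1, b.2.1⟩ : Set.Iio (Ordinal.cof γ).ord) : Ordinal) :=
        congrArg (Subtype.val : Set.Iio m → Ordinal) hab
      have h2 := e.injective (Subtype.ext hab')
      simp only [Subtype.mk.injEq] at h2
      exact Subtype.ext h2
  exact Set.finite_coe_iff.mp hfin

end Aux

/-- Theorem (coherence of ρ₂ modulo bounded): for a C-sequence on ω₁ satisfying `(⋆)`,
for all `β < γ < ω₁` the function `α ↦ ρ₂(α,γ) - ρ₂(α,β)` is bounded on `β`. -/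
theorem statement2 (C : Ordinal → Set Ordinal) (hC : IsCSequence C) (hstar : StarProperty C)
    (Tr : Ordinal → Ordinal → Finset Ordinal) (hTr : IsUpperTrace C Tr) :
    ∀ β γ, β < γ → γ < omega1 →
      ∃ k : ℕ, ∀ α, α < β → |rho2 Tr α γ - rho2 Tr α β| ≤ (k : ℤ) := by
  suffices H : ∀ γ, γ < omega1 → ∀ β, β < γ →
      ∃ k : ℕ, ∀ α, α < β → |rho2 Tr α γ - rho2 Tr α β| ≤ (k : ℤ) by
    intro β γ h1 h2; exact H γ h2 β h1
  intro γ
  induction γ using Ordinal.induction with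
  | h γ IH =>
  intro hγ β hβγ
  have hβω : β < omega1 := hβγ.trans hγ
  -- bounds coming from the inductive hypothesis at β (coherence of β with ξ < β)
  have hg : ∀ ξ : Ordinal, ∃ k : ℕ, ξ < β →
      ∀ α, α < ξ → |rho2 Tr α β - rho2 Tr α ξ| ≤ (k : ℤ) := by
    intro ξ
    by_cases h : ξ < β
    · obtain ⟨k, hk⟩ := IH β hβγ hβω ξ h
      exact ⟨k, fun _ => hk⟩
    · exact ⟨0, fun h' => absurd h' h⟩
  choose g hgspec using hg
  -- the first step of the walk from γ past β
  obtain ⟨hξsC, hβξs, hξsγ⟩ := minStep hC hγ hβγ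
  set ξs := sInf (C γ \ Set.Iio β) with hξs_def
  have hks : ∃ ks : ℕ, ∀ α, α < β → |rho2 Tr α ξs - rho2 Tr α β| ≤ (ks : ℤ) := by
    rcases eq_or_lt_of_le hβξs with heq | hlt
    · exact ⟨0, fun α _ => by rw [← heq]; simp⟩
    · exact IH ξs hξsγ (hξsγ.trans hγ) β hlt
  obtain ⟨ks, hksspec⟩ := hks
  have hSfin : (C γ ∩ Set.Iio β).Finite := finite_inter hC hstar hγ hβγ
  have hk0 : ∃ k0 : ℕ, ∀ ξ ∈ C γ ∩ Set.Iio β,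
      (g ξ + 1) ⊔ (rho2 Tr ξ γ - rho2 Tr ξ β).natAbs ≤ k0 := by
    refine ⟨hSfin.toFinset.sup
      (fun ξ => (g ξ + 1) ⊔ (rho2 Tr ξ γ - rho2 Tr ξ β).natAbs), fun ξ hξ => ?_⟩
    exact Finset.le_sup (f := fun ξ => (g ξ + 1) ⊔ (rho2 Tr ξ γ - rho2 Tr ξ β).natAbs)
      (hSfin.mem_toFinset.2 hξ)
  obtain ⟨k0, hk0spec⟩ := hk0
  refine ⟨k0 ⊔ (ks + 1), fun α hαβ => ?_⟩
  have hαγ : α < γ := hαβ.trans hβγ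
  obtain ⟨hξaC, hαξa, hξaγ⟩ := minStep hC hγ hαγ
  set ξa := sInf (C γ \ Set.Iio α) with hξa_def
  have hstep : rho2 Tr α γ = rho2 Tr α ξa + 1 := rho2_step hC hTr hγ hαγ
  by_cases hcase : ξa < β
  · -- the first step lands below β
    have hle : ((g ξa + 1) ⊔ (rho2 Tr ξa γ - rho2 Tr ξa β).natAbs) ≤ k0 :=
      hk0spec ξa ⟨hξaC, hcase⟩
    rcases eq_or_lt_of_le hαξa with heq | hlt
    · -- α itself is in C γ; a single fixed value, bounded by the sup
      have h1 : (rho2 Tr α γ - rho2 Tr α β).natAbs ≤ k0 ⊔ (ks + 1) := by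
        rw [heq]
        exact le_trans (le_trans (le_max_right _ _) hle) (le_max_left _ _)
      calc |rho2 Tr α γ - rho2 Tr α β|
          = ((rho2 Tr α γ - rho2 Tr α β).natAbs : ℤ) := Int.abs_eq_natAbs _
        _ ≤ ((k0 ⊔ (ks + 1) : ℕ) : ℤ) := by exact_mod_cast h1
    · have h1 : |rho2 Tr α β - rho2 Tr α ξa| ≤ (g ξa : ℤ) := hgspec ξa hcase α hlt
      have h2 : g ξa + 1 ≤ k0 ⊔ (ks + 1) :=
        le_trans (le_trans (le_max_left _ _) hle) (le_max_left _ _)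
      have h3 : |rho2 Tr α γ - rho2 Tr α β| ≤ (g ξa : ℤ) + 1 := by
        rw [hstep]
        calc |rho2 Tr α ξa + 1 - rho2 Tr α β|
            ≤ |rho2 Tr α ξa - rho2 Tr α β| + |(1 : ℤ)| := by
              have : rho2 Tr α ξa + 1 - rho2 Tr α β
                  = (rho2 Tr α ξa - rho2 Tr α β) + 1 := by ring
              rw [this]; exact abs_add_le _ _
          _ ≤ (g ξa : ℤ) + 1 := by
              rw [abs_one]
              exact add_le_add_left (by rwa [abs_sub_comm]) 1
      calc |rho2 Tr α γ - rho2 Tr α β| ≤ (g ξa : ℤ) + 1 := h3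
        _ ≤ ((k0 ⊔ (ks + 1) : ℕ) : ℤ) := by exact_mod_cast h2
  · -- the first step jumps past β, so it equals ξs
    have hξeq : ξa = ξs := by
      apply le_antisymm
      · exact csInf_le' ⟨hξsC, not_lt.2 (le_trans hαβ.le hβξs)⟩
      · exact csInf_le' ⟨hξaC, hcase⟩
    have h1 : |rho2 Tr α ξs - rho2 Tr α β| ≤ (ks : ℤ) := hksspec α hαβ
    have h3 : |rho2 Tr α γ - rho2 Tr α β| ≤ (ks : ℤ) + 1 := by
      rw [hstep, hξeq]
      calc |rho2 Tr α ξs + 1 - rho2 Tr α β|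
          ≤ |rho2 Tr α ξs - rho2 Tr α β| + |(1 : ℤ)| := by
            have : rho2 Tr α ξs + 1 - rho2 Tr α β
                = (rho2 Tr α ξs - rho2 Tr α β) + 1 := by ring
            rw [this]; exact abs_add_le _ _
        _ ≤ (ks : ℤ) + 1 := by rw [abs_one]; exact add_le_add_left h1 1
    have h2 : ks + 1 ≤ k0 ⊔ (ks + 1) := le_max_right _ _
    calc |rho2 Tr α γ - rho2 Tr α β| ≤ (ks : ℤ) + 1 := h3
      _ ≤ ((k0 ⊔ (ks + 1) : ℕ) : ℤ) := by exact_mod_cast h2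
end
end

section
/- Fix a C-sequence ⟨C_α | α < ω₁⟩ on ω₁ satisfying (⋆). Then ρ₂ is nontrivial modulo bounded: there exists no function ρ̃₂ : ω₁ → ℤ such that for every β < ω₁ the function α ↦ ρ̃₂(α) − ρ₂(α,β) is bounded on β. -/
noncomputable section
open Ordinal Set

/- ---------------- Auxiliary material ---------------- -/

section Aux

variable {C : Ordinal.{0} → Set Ordinal.{0}} {Tr : Ordinal.{0} → Ordinal.{0} → Finset Ordinal.{0}}

/-- The single step of the walk. -/
lemma walk_step (hC : IsCSequence C) (hTr : IsUpperTrace C Tr) {α β : Ordinal}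
    (hab : α < β) (hb : β < omega1) :
    α ≤ sInf (C β \ Set.Iio α) ∧ sInf (C β \ Set.Iio α) < β ∧
      Tr α β = insert β (Tr α (sInf (C β \ Set.Iio α))) := by
  obtain ⟨η, hη, hle⟩ := (hC β hb).2 α hab
  have hne : (C β \ Set.Iio α).Nonempty := ⟨η, hη, not_lt.2 hle⟩
  have hmem := csInf_mem hne
  exact ⟨not_lt.1 hmem.2, (hC β hb).1 _ hmem.1, hTr.2 α β hab hb⟩

/-- Basic membership facts about the trace. -/
lemma trace_mem (hC : IsCSequence C) (hTr : IsUpperTrace C Tr) :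
    ∀ β, β < omega1 → ∀ α, α ≤ β →
      α ∈ Tr α β ∧ β ∈ Tr α β ∧ ∀ x ∈ Tr α β, α ≤ x ∧ x ≤ β := by
  intro β
  induction β using Ordinal.induction with
  | _ β IH =>
    intro hb α hα
    rcases eq_or_lt_of_le hα with rfl | hab
    · rw [hTr.1 α]
      refine ⟨Finset.mem_singleton_self _, Finset.mem_singleton_self _, ?_⟩
      intro x hx
      rw [Finset.mem_singleton] at hx
      simp [hx]
    · obtain ⟨h1, h2, h3⟩ := walk_step hC hTr hab hb
      obtain ⟨m1, m2, m3⟩ := IH _ h2 (h2.trans hb) α h1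
      rw [h3]
      refine ⟨Finset.mem_insert_of_mem m1, Finset.mem_insert_self _ _, ?_⟩
      intro x hx
      rcases Finset.mem_insert.1 hx with rfl | hx
      · exact ⟨hab.le, le_rfl⟩
      · exact ⟨(m3 x hx).1, (m3 x hx).2.trans h2.le⟩

lemma two_le_rho2 (hC : IsCSequence C) (hTr : IsUpperTrace C Tr) {α β : Ordinal}
    (hab : α < β) (hb : β < omega1) : (2 : ℤ) ≤ rho2 Tr α β := by
  obtain ⟨m1, m2, -⟩ := trace_mem hC hTr β hb α hab.le
  have : ({α, β} : Finset Ordinal) ⊆ Tr α β := by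
    intro x hx
    rcases Finset.mem_insert.1 hx with rfl | hx
    · exact m1
    · rw [Finset.mem_singleton] at hx; subst hx; exact m2
  have h2 : ({α, β} : Finset Ordinal).card = 2 := Finset.card_pair hab.ne
  have := Finset.card_le_card this
  rw [h2] at this
  unfold rho2
  exact_mod_cast this

/-- Under `(⋆)`, `C γ ∩ β` is bounded below `β` whenever `β` is below the first
element of `C γ` not below `β`. -/
lemma bounded_below (hC : IsCSequence C) (hstar : StarProperty C) {β γ : Ordinal}
    (hβ : 0 < β) (hβγ : β < γ) (hγ : γ < omega1) :
    ∃ s, s < β ∧ ∀ x ∈ C γ, x < β → x ≤ s := by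
  obtain ⟨e⟩ := hstar γ hγ
  obtain ⟨η, hη, hle⟩ := (hC γ hγ).2 β hβγ
  have hne : (C γ \ Set.Iio β).Nonempty := ⟨η, hη, not_lt.2 hle⟩
  set γ₁ := sInf (C γ \ Set.Iio β) with hγ₁def
  have hγ₁ : γ₁ ∈ C γ \ Set.Iio β := csInf_mem hne
  have hγ₁C : γ₁ ∈ C γ := hγ₁.1
  have hβγ₁ : β ≤ γ₁ := not_lt.1 hγ₁.2
  -- the order type of `C γ` is at most `ω`
  have hcof : (Ordinal.cof γ).ord ≤ Ordinal.omega0 := by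
    have h2 : Ordinal.card γ < Cardinal.aleph 1 := Cardinal.lt_ord.1 hγ
    rw [← Cardinal.succ_aleph0, Order.lt_succ_iff] at h2
    have h1 : Ordinal.cof γ ≤ Cardinal.aleph0 := (Ordinal.cof_le_card γ).trans h2
    calc (Ordinal.cof γ).ord ≤ Cardinal.aleph0.ord := Cardinal.ord_le_ord.2 h1
      _ = Ordinal.omega0 := Cardinal.ord_aleph0
  have hval : (e ⟨γ₁, hγ₁C⟩ : Ordinal) < Ordinal.omega0 :=
    lt_of_lt_of_le (e ⟨γ₁, hγ₁C⟩).2 hcof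
  obtain ⟨n, hn⟩ := Ordinal.lt_omega0.1 hval
  -- elements of `C γ` below `β` are mapped below `e γ₁`
  have key : ∀ x (hx : x ∈ C γ), x < β → (e ⟨x, hx⟩ : Ordinal) < (e ⟨γ₁, hγ₁C⟩ : Ordinal) := by
    intro x hx hxβ
    have : (⟨x, hx⟩ : C γ) < ⟨γ₁, hγ₁C⟩ := by
      rw [Subtype.mk_lt_mk]; exact lt_of_lt_of_le hxβ hβγ₁
    exact e.lt_iff_lt.2 this
  match n, hn with
  | 0, hn =>
    refine ⟨0, hβ, fun x hx hxβ => absurd (key x hx hxβ) ?_⟩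
    rw [hn]; simp
  | (m+1), hn =>
    have hmlt : ((m : Ordinal)) < (Ordinal.cof γ).ord := by
      refine lt_trans ?_ (e ⟨γ₁, hγ₁C⟩).2
      rw [hn]
      exact_mod_cast Nat.lt_succ_self m
    set sm : Set.Iio (Ordinal.cof γ).ord := ⟨(m : Ordinal), hmlt⟩
    set s := (e.symm sm : Ordinal) with hsdef
    have hsC : (e.symm sm : Ordinal) ∈ C γ := (e.symm sm).2
    have hes : e ⟨s, hsC⟩ = sm := by
      have h : (⟨s, hsC⟩ : C γ) = e.symm sm := Subtype.ext rfl
      rw [h, OrderIso.apply_symm_apply]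
    have hesv : (e ⟨s, hsC⟩ : Ordinal) = (m : Ordinal) := by rw [hes]
    have hsγ₁ : s < γ₁ := by
      have hv : ((e ⟨s, hsC⟩ : Ordinal)) < (e ⟨γ₁, hγ₁C⟩ : Ordinal) := by
        rw [hesv, hn]; exact_mod_cast Nat.lt_succ_self m
      exact e.lt_iff_lt.1 (Subtype.coe_lt_coe.1 hv)
    have hsβ : s < β := by
      by_contra h
      have : s ∈ C γ \ Set.Iio β := ⟨hsC, h⟩
      exact absurd (csInf_le' this) (not_le.2 hsγ₁)
    refine ⟨s, hsβ, fun x hx hxβ => ?_⟩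
    have h1 : (e ⟨x, hx⟩ : Ordinal) < (m : Ordinal) + 1 := by
      have := key x hx hxβ
      rw [hn] at this
      exact_mod_cast this
    rw [Ordinal.add_one_eq_succ, Order.lt_succ_iff] at h1
    have h2 : e ⟨x, hx⟩ ≤ e ⟨s, hsC⟩ := by
      rw [← Subtype.coe_le_coe, hesv]
      exact h1
    exact e.le_iff_le.1 h2

/-- The key gluing lemma: if `β` is a limit ordinal, then for every `α ≤ β`
sufficiently close to `β`, the walk from `γ` to `α` passes through `β`. -/
lemma trace_glue (hC : IsCSequence C) (hstar : StarProperty C) (hTr : IsUpperTrace C Tr) :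
    ∀ γ, γ < omega1 → ∀ β, β ≤ γ → Order.IsSuccLimit β →
      ∃ t, t < β ∧ ∀ α, t < α → α ≤ β → Tr α γ = Tr β γ ∪ Tr α β := by
  intro γ
  induction γ using Ordinal.induction with
  | _ γ IH =>
    intro hγ β hβγ hβ
    rcases eq_or_lt_of_le hβγ with rfl | hlt
    · refine ⟨0, hβ.pos, fun α hα hαβ => ?_⟩
      rw [hTr.1 β]
      have := (trace_mem hC hTr β hγ α hαβ).2.1
      exact (Finset.union_eq_right.mpr (Finset.singleton_subset_iff.mpr this)).symm
    · -- β < γ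
      obtain ⟨η, hη, hle⟩ := (hC γ hγ).2 β hlt
      have hne : (C γ \ Set.Iio β).Nonempty := ⟨η, hη, not_lt.2 hle⟩
      set γ₁ := sInf (C γ \ Set.Iio β) with hγ₁def
      have hγ₁ : γ₁ ∈ C γ \ Set.Iio β := csInf_mem hne
      have hγ₁γ : γ₁ < γ := (hC γ hγ).1 _ hγ₁.1
      have hβγ₁ : β ≤ γ₁ := not_lt.1 hγ₁.2
      obtain ⟨t₁, ht₁, H₁⟩ := IH γ₁ hγ₁γ (hγ₁γ.trans hγ) β hβγ₁ hβ
      obtain ⟨s, hs, hsb⟩ := bounded_below hC hstar hβ.pos hlt hγ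
      refine ⟨max t₁ s, max_lt ht₁ hs, ?_⟩
      intro α hα hαβ
      have hαγ : α < γ := lt_of_le_of_lt hαβ hlt
      have hst : sInf (C γ \ Set.Iio α) = γ₁ := by
        apply le_antisymm
        · exact csInf_le' ⟨hγ₁.1, not_lt.2 (hαβ.trans hβγ₁)⟩
        · refine le_csInf ⟨η, hη, not_lt.2 (hαβ.trans hle)⟩ ?_
          intro x hx
          by_contra hxγ₁
          push_neg at hxγ₁
          have hxβ : x < β := by
            by_contra hxβ
            exact absurd (csInf_le' (show x ∈ C γ \ Set.Iio β from ⟨hx.1, hxβ⟩)) (not_le.2 hxγ₁)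
          have := hsb x hx.1 hxβ
          have h2 : α ≤ x := not_lt.1 hx.2
          have : α ≤ s := h2.trans this
          exact absurd this (not_le.2 (lt_of_le_of_lt (le_max_right t₁ s) hα))
      rw [hTr.2 α γ hαγ hγ, hst, H₁ α (lt_of_le_of_lt (le_max_left t₁ s) hα) hαβ,
        hTr.2 β γ hlt hγ, ← hγ₁def, Finset.insert_union]

/-- The additivity of `ρ₂` along a gluing decomposition. -/
lemma rho2_glue (hC : IsCSequence C) (hTr : IsUpperTrace C Tr) {α β γ : Ordinal}
    (hαβ : α ≤ β) (hβγ : β ≤ γ) (hγ : γ < omega1)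
    (hglue : Tr α γ = Tr β γ ∪ Tr α β) :
    rho2 Tr α γ = rho2 Tr β γ + rho2 Tr α β - 1 := by
  have hβω : β < omega1 := lt_of_le_of_lt hβγ hγ
  obtain ⟨hb1, -, hb3⟩ := trace_mem hC hTr γ hγ β hβγ
  obtain ⟨-, hb2', hb3'⟩ := trace_mem hC hTr β hβω α hαβ
  have hinter : Tr β γ ∩ Tr α β = {β} := by
    apply Finset.ext
    intro x
    rw [Finset.mem_inter, Finset.mem_singleton]
    constructor
    · rintro ⟨h1, h2⟩
      exact le_antisymm ((hb3' x h2).2) ((hb3 x h1).1)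
    · rintro rfl
      exact ⟨hb1, hb2'⟩
  have hcard := Finset.card_union_add_card_inter (Tr β γ) (Tr α β)
  rw [hinter, Finset.card_singleton] at hcard
  unfold rho2
  rw [hglue]
  have : ((Tr β γ ∪ Tr α β).card : ℤ) + 1 = (Tr β γ).card + (Tr α β).card := by
    exact_mod_cast congrArg (fun n : ℕ => (n : ℤ)) hcard
  omega

/-- Unbounded subsets of `ω₁`. -/
def Unb (S : Set Ordinal.{0}) : Prop :=
  ∀ ξ, ξ < omega1 → ∃ η, η ∈ S ∧ ξ < η ∧ η < omega1

/-- The set of accumulation points (below `ω₁`) of `S`. -/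
def accS (S : Set Ordinal.{0}) : Set Ordinal.{0} :=
  {β | β < omega1 ∧ 0 < β ∧ ∀ ξ, ξ < β → ∃ η, η ∈ S ∧ ξ < η ∧ η < β}

lemma accS_isLimit {S : Set Ordinal.{0}} {β : Ordinal} (h : β ∈ accS S) : Order.IsSuccLimit β := by
  refine Ordinal.isSuccLimit_iff.2 ⟨h.2.1.ne', Order.isSuccPrelimit_of_succ_lt fun a ha => ?_⟩
  obtain ⟨η, -, h1, h2⟩ := h.2.2 a ha
  exact lt_of_le_of_lt (Order.succ_le_of_lt h1) h2

lemma unb_accS {S : Set Ordinal.{0}} (h : Unb S) : Unb (accS S) := by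
  intro ξ hξ
  choose g hgS hglt hgω using h
  let F : {x : Ordinal // x < omega1} → {x : Ordinal // x < omega1} :=
    fun p => ⟨g p.1 p.2, hgω p.1 p.2⟩
  let r : ℕ → {x : Ordinal // x < omega1} := fun n => Nat.rec (F ⟨ξ, hξ⟩) (fun _ p => F p) n
  have hrS : ∀ n, (r n).1 ∈ S := by
    intro n; cases n with
    | zero => exact hgS ξ hξ
    | succ m => exact hgS _ _
  have hrlt : ∀ n, (r n).1 < (r (n+1)).1 := fun n => hglt _ _
  have hξr : ξ < (r 0).1 := hglt ξ hξ
  set β := ⨆ n, (r n).1 with hβdef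
  have hβω : β < omega1 := by
    show (⨆ n, (r n).1) < (Cardinal.aleph 1).ord
    rw [Cardinal.ord_aleph]; exact Ordinal.iSup_lt_omega_one (fun n => by have h : (r n).1 < (Cardinal.aleph 1).ord := (r n).2; rwa [Cardinal.ord_aleph] at h)
  have hle : ∀ n, (r n).1 ≤ β := fun n => Ordinal.le_iSup (fun n => (r n).1) n
  have hξβ : ξ < β := lt_of_lt_of_le hξr (hle 0)
  refine ⟨β, ⟨hβω, lt_of_le_of_lt (by simp : (0:Ordinal) ≤ ξ) hξβ, ?_⟩, hξβ, hβω⟩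
  intro ζ hζ
  rw [hβdef, Ordinal.lt_iSup_iff] at hζ
  obtain ⟨n, hn⟩ := hζ
  exact ⟨(r (n+1)).1, hrS (n+1), lt_trans hn (hrlt n),
    lt_of_lt_of_le (hrlt (n+1)) (hle (n+2))⟩

/-- Pigeonhole: some fiber of `K` on the limit ordinals is unbounded in `ω₁`. -/
lemma pigeonhole (K : Ordinal.{0} → ℕ) :
    ∃ n : ℕ, Unb {β | Order.IsSuccLimit β ∧ β < omega1 ∧ K β = n} := by
  by_contra h
  push_neg at h
  have h' : ∀ n : ℕ, ∃ ξ, ξ < omega1 ∧ ∀ η, (Order.IsSuccLimit η ∧ η < omega1 ∧ K η = n) →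
      ξ < η → omega1 ≤ η := by
    intro n
    have hn := h n
    unfold Unb at hn
    push_neg at hn
    obtain ⟨ξ, hξ, hη⟩ := hn
    exact ⟨ξ, hξ, fun η h1 h2 => (hη η h1 h2)⟩
  choose ξ hξω hξb using h'
  set b := ⨆ n, ξ n with hbdef
  have hbω : b < omega1 := by
    show (⨆ n, ξ n) < (Cardinal.aleph 1).ord
    rw [Cardinal.ord_aleph]; exact Ordinal.iSup_lt_omega_one (fun n => by have h := hξω n; rwa [omega1, Cardinal.ord_aleph] at h)
  set β := b + Ordinal.omega0 with hβdef
  have hβlim : Order.IsSuccLimit β := Ordinal.isSuccLimit_add b Ordinal.isSuccLimit_omega0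
  have hβω : β < omega1 := by
    show β < (Cardinal.aleph 1).ord
    rw [Cardinal.lt_ord, hβdef, Ordinal.card_add, Ordinal.card_omega0]
    have h1 : Ordinal.card b ≤ Cardinal.aleph0 := by
      have := Cardinal.lt_ord.1 hbω
      rwa [← Cardinal.succ_aleph0, Order.lt_succ_iff] at this
    calc Ordinal.card b + Cardinal.aleph0 ≤ Cardinal.aleph0 + Cardinal.aleph0 :=
          add_le_add_left h1 _
      _ = Cardinal.aleph0 := Cardinal.aleph0_add_aleph0
      _ < Cardinal.aleph 1 := Cardinal.aleph0_lt_aleph_one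
  have hbβ : b < β := by
    rw [hβdef]
    exact (lt_add_iff_pos_right b).2 Ordinal.omega0_pos
  exact absurd (hξb (K β) β ⟨hβlim, hβω, rfl⟩
    (lt_of_le_of_lt (Ordinal.le_iSup ξ (K β)) hbβ)) (not_le.2 hβω)

end Aux

/-- Theorem (nontriviality of ρ₂ modulo bounded): for a C-sequence on ω₁ satisfying (⋆),
there is no `ρ̃₂ : ω₁ → ℤ` such that `ρ̃₂ - ρ₂(·,β)` is bounded on `β` for every `β < ω₁`. -/
theorem statement3 (C : Ordinal → Set Ordinal) (hC : IsCSequence C) (hstar : StarProperty C)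
    (Tr : Ordinal → Ordinal → Finset Ordinal) (hTr : IsUpperTrace C Tr) :
    ¬∃ f : Ordinal → ℤ, ∀ β, β < omega1 →
      ∃ k : ℕ, ∀ α, α < β → |f α - rho2 Tr α β| ≤ (k : ℤ) := by
  classical
  rintro ⟨f, hf⟩
  have omega1pos : (0 : Ordinal) < omega1 := by
    refine Cardinal.lt_ord.2 ?_
    simpa using lt_of_le_of_lt (Cardinal.zero_le _) Cardinal.aleph0_lt_aleph_one
  set K : Ordinal → ℕ := fun β => if h : β < omega1 then (hf β h).choose else 0 with hKdef
  have hK : ∀ β, (h : β < omega1) → ∀ α, α < β → |f α - rho2 Tr α β| ≤ (K β : ℤ) := by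
    intro β h α hα
    have hKβ : K β = (hf β h).choose := by rw [hKdef]; simp [h]
    rw [hKβ]
    exact (hf β h).choose_spec α hα
  obtain ⟨n₀, hΓ⟩ := pigeonhole K
  set Γ : Set Ordinal := {β | Order.IsSuccLimit β ∧ β < omega1 ∧ K β = n₀} with hΓdef
  set A : ℕ → Set Ordinal := fun j => Nat.rec Γ (fun _ S => accS S) j with hAdef
  have hAunb : ∀ j, Unb (A j) := by
    intro j; induction j with
    | zero => exact hΓ
    | succ m ih => exact unb_accS ih
  -- growth of ρ₂ along the iterated accumulation sets
  have main : ∀ n : ℕ, ∀ j : ℕ, ∃ β γ, β ∈ accS (A j) ∧ γ ∈ Γ ∧ β < γ ∧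
      ((n : ℤ) + 2 ≤ rho2 Tr β γ) := by
    intro n
    induction n with
    | zero =>
      intro j
      obtain ⟨β, hβA, -, hβω⟩ := hAunb (j+1) 0 omega1pos
      obtain ⟨γ, hγΓ, hβγ, hγω⟩ := hΓ β hβω
      exact ⟨β, γ, hβA, hγΓ, hβγ, by simpa using two_le_rho2 hC hTr hβγ hγω⟩
    | succ n ih =>
      intro j
      obtain ⟨β', γ, hβ'A, hγΓ, hβ'γ, hrho⟩ := ih (j+1)
      have hγω : γ < omega1 := hγΓ.2.1
      have hβ'lim : Order.IsSuccLimit β' := accS_isLimit hβ'A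
      have hβ'ω : β' < omega1 := hβ'A.1
      obtain ⟨t, ht, H⟩ := trace_glue hC hstar hTr γ hγω β' hβ'γ.le hβ'lim
      obtain ⟨β, hβA, htβ, hββ'⟩ := hβ'A.2.2 t ht
      have hglue := H β htβ hββ'.le
      have e1 := rho2_glue hC hTr hββ'.le hβ'γ.le hγω hglue
      have h2 := two_le_rho2 hC hTr hββ' hβ'ω
      refine ⟨β, γ, hβA, hγΓ, hββ'.trans hβ'γ, ?_⟩
      push_cast
      linarith
  obtain ⟨β, γ, hβA, hγΓ, hβγ, hrho⟩ := main (2 * n₀) 0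
  have hγω : γ < omega1 := hγΓ.2.1
  have hβlim : Order.IsSuccLimit β := accS_isLimit hβA
  obtain ⟨t, ht, H⟩ := trace_glue hC hstar hTr γ hγω β hβγ.le hβlim
  obtain ⟨α₀, hα₀Γ, htα₀, hα₀β⟩ := hβA.2.2 t ht
  have hα₀Γ' : Order.IsSuccLimit α₀ ∧ α₀ < omega1 ∧ K α₀ = n₀ := hα₀Γ
  have hglue := H α₀ htα₀ hα₀β.le
  have e1 := rho2_glue hC hTr hα₀β.le hβγ.le hγω hglue
  have h2 := two_le_rho2 hC hTr hα₀β hβA.1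
  have hα₀γ : α₀ < γ := hα₀β.trans hβγ
  obtain ⟨t₂, ht₂, H₂⟩ := trace_glue hC hstar hTr γ hγω α₀ hα₀γ.le hα₀Γ'.1
  set α := t₂ + 1 with hαdef
  have hαα₀ : α < α₀ := by
    rw [hαdef, Ordinal.add_one_eq_succ]; exact hα₀Γ'.1.succ_lt ht₂
  have ht₂α : t₂ < α := by
    rw [hαdef, Ordinal.add_one_eq_succ]; exact Order.lt_succ t₂
  have hglue₂ := H₂ α ht₂α hαα₀.le
  have e2 := rho2_glue hC hTr hαα₀.le hα₀γ.le hγω hglue₂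
  have b1 := hK γ hγω α (hαα₀.trans hα₀γ)
  have b2 := hK α₀ hα₀Γ'.2.1 α hαα₀
  rw [hγΓ.2.2] at b1
  rw [hα₀Γ'.2.2] at b2
  have h3 := two_le_rho2 hC hTr hαα₀ hα₀Γ'.2.1
  rw [abs_le] at b1 b2
  obtain ⟨b1l, b1r⟩ := b1
  obtain ⟨b2l, b2r⟩ := b2
  push_cast at hrho
  linarith
end
end

section
/- Fix a C-sequence ⟨C_α | α < ω₁⟩ on ω₁ satisfying (⋆). Let 𝒜 = {(β_i, γ_i) | i ∈ ω₁} ⊆ ω₁ × ω₁ satisfy max{β_i, γ_i} < min{β_j, γ_j} for every i < j in ω₁. Then for every ℓ ∈ ℕ there exists a cofinal set Γ ⊆ ω₁ such that ρ₂(β_i, γ_j) > ℓ for all i < j in Γ. -/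
noncomputable section
open Ordinal Set

/-! ### Auxiliary lemmas about `ω₁` -/

lemma omega1_isLimit : Order.IsSuccLimit omega1 := Cardinal.isSuccLimit_ord (Cardinal.aleph0_le_aleph 1)

lemma succ_lt_omega1 {δ : Ordinal.{0}} (h : δ < omega1) : δ + 1 < omega1 := by
  rw [Ordinal.add_one_eq_succ]
  exact omega1_isLimit.succ_lt h

lemma zero_lt_omega1 : (0 : Ordinal.{0}) < omega1 := omega1_isLimit.pos

/-- A countable supremum below `ω₁` is bounded below `ω₁` (regularity of `ω₁`). -/
lemma bsup_lt_omega1 (x : Ordinal.{0}) (hx : x < omega1) (G : Ordinal.{0} → Ordinal.{0})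
    (hG : ∀ ν, ν ≤ x → G ν < omega1) : ∃ y, y < omega1 ∧ ∀ ν, ν ≤ x → G ν ≤ y := by
  have ho : x + 1 < omega1 := succ_lt_omega1 hx
  have hcnt : Countable (x + 1).ToType := by
    rw [← Cardinal.mk_le_aleph0_iff, Cardinal.mk_toType]
    have h1 : (x + 1).card < Cardinal.aleph 1 := Cardinal.lt_ord.mp ho
    rwa [← Cardinal.succ_aleph0, Order.lt_succ_iff] at h1
  set F : (x + 1).ToType → Ordinal.{0} :=
    fun i => G ((Ordinal.ToType.mk.symm i : Set.Iio (x + 1)) : Ordinal) with hF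
  have hFlt : ∀ i, F i < omega1 := by
    intro i
    apply hG
    have h2 : ((Ordinal.ToType.mk.symm i : Set.Iio (x+1)) : Ordinal) < x + 1 :=
      (Ordinal.ToType.mk.symm i).2
    exact Order.lt_add_one_iff.mp h2
  refine ⟨⨆ i, F i, by
    have h := Ordinal.iSup_lt_omega_one (f := F) (by simpa [omega1, Cardinal.ord_aleph] using hFlt)
    simpa [omega1, Cardinal.ord_aleph] using h, ?_⟩
  intro ν hν
  have hmem : ν ∈ Set.Iio (x + 1) := by
    rw [Set.mem_Iio]; exact Order.lt_add_one_iff.mpr hν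
  have : G ν = F (Ordinal.ToType.mk ⟨ν, hmem⟩) := by
    rw [hF]; simp
  rw [this]
  exact le_ciSup ⟨omega1, by rintro _ ⟨i, rfl⟩; exact (hFlt i).le⟩ _

/-- Closure points of a function `Iio ω₁ → Iio ω₁` are unbounded in `ω₁`. -/
lemma closure_exists (G : Ordinal.{0} → Ordinal.{0}) (hG : ∀ ν, ν < omega1 → G ν < omega1) :
    ∀ θ, θ < omega1 → ∃ δ, θ ≤ δ ∧ δ < omega1 ∧ ∀ ν, ν < δ → G ν < δ := by
  intro θ hθ
  have hbnd : ∀ x, x < omega1 → ∃ y, y < omega1 ∧ x < y ∧ ∀ ν, ν ≤ x → G ν < y := by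
    intro x hx
    obtain ⟨y, hy, hy2⟩ := bsup_lt_omega1 x hx G (fun ν hν => hG ν (lt_of_le_of_lt hν hx))
    refine ⟨max y x + 1, succ_lt_omega1 (max_lt hy hx), ?_, ?_⟩
    · exact lt_of_le_of_lt (le_max_right y x) (Order.lt_add_one_iff.mpr le_rfl)
    · intro ν hν
      exact lt_of_le_of_lt (le_trans (hy2 ν hν) (le_max_left y x))
        (Order.lt_add_one_iff.mpr le_rfl)
  set D : Ordinal.{0} → Ordinal.{0} :=
    fun x => if h : x < omega1 then (hbnd x h).choose else 0 with hD
  have hD1 : ∀ x, x < omega1 → D x < omega1 ∧ x < D x ∧ ∀ ν, ν ≤ x → G ν < D x := by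
    intro x hx
    rw [hD]; simp only [hx, dif_pos]
    exact (hbnd x hx).choose_spec
  set d : ℕ → Ordinal.{0} := fun n => D^[n] θ with hd
  have hdlt : ∀ n, d n < omega1 := by
    intro n
    induction n with
    | zero => simpa [hd] using hθ
    | succ n ih =>
      have : d (n + 1) = D (d n) := Function.iterate_succ_apply' D n θ
      rw [this]
      exact (hD1 _ ih).1
  have hbdd : BddAbove (Set.range d) := ⟨omega1, by rintro _ ⟨n, rfl⟩; exact (hdlt n).le⟩
  refine ⟨⨆ n, d n, ?_, by
    have h := Ordinal.iSup_lt_omega_one (f := d) (by simpa [omega1, Cardinal.ord_aleph] using hdlt)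
    simpa [omega1, Cardinal.ord_aleph] using h, ?_⟩
  · have : d 0 = θ := rfl
    rw [← this]; exact le_ciSup hbdd 0
  · intro ν hν
    obtain ⟨n, hn⟩ := (lt_ciSup_iff hbdd).mp hν
    have h1 : G ν < D (d n) := (hD1 _ (hdlt n)).2.2 ν hn.le
    have h2 : D (d n) = d (n + 1) := (Function.iterate_succ_apply' D n θ).symm
    exact lt_of_lt_of_le (h2 ▸ h1) (le_ciSup hbdd (n + 1))

/-- A weak form of Fodor's lemma: a regressive function on `ω₁` is bounded by a fixed `ξ₀`
on an unbounded set of (`F`-closed) points. -/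
lemma fodorWeak (F f : Ordinal.{0} → Ordinal.{0}) (hF : ∀ ν, ν < omega1 → F ν < omega1)
    (hf : ∀ δ, 0 < δ → δ < omega1 → f δ < δ) :
    ∃ ξ₀, ξ₀ < omega1 ∧ ∀ θ, θ < omega1 → ∃ δ, θ ≤ δ ∧ δ < omega1 ∧ 0 < δ ∧
      (∀ ν, ν < δ → F ν < δ) ∧ f δ ≤ ξ₀ := by
  by_contra hcon
  push_neg at hcon
  have h' : ∀ ξ, ξ < omega1 → ∃ θ, θ < omega1 ∧ ∀ δ, θ ≤ δ → δ < omega1 → 0 < δ →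
      (∀ ν, ν < δ → F ν < δ) → ξ < f δ := by
    intro ξ hξ
    obtain ⟨θ, hθ, h2⟩ := hcon ξ hξ
    exact ⟨θ, hθ, fun δ h1 h2' h3 h4 => h2 δ h1 h2' h3 h4⟩
  set H : Ordinal.{0} → Ordinal.{0} :=
    fun ξ => if h : ξ < omega1 then (h' ξ h).choose else 0 with hH
  have hH1 : ∀ ξ, ξ < omega1 → H ξ < omega1 ∧ ∀ δ, H ξ ≤ δ → δ < omega1 → 0 < δ →
      (∀ ν, ν < δ → F ν < δ) → ξ < f δ := by
    intro ξ hξ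
    rw [hH]; simp only [hξ, dif_pos]
    exact (h' ξ hξ).choose_spec
  obtain ⟨δ, hδ1, hδ2, hδ3⟩ := closure_exists (fun ν => max (F ν) (H ν))
    (fun ν hν => max_lt (hF ν hν) (hH1 ν hν).1) 1 (by
      have := succ_lt_omega1 zero_lt_omega1
      simpa using this)
  have hδpos : 0 < δ := lt_of_lt_of_le (by norm_num) hδ1
  have hFcl : ∀ ν, ν < δ → F ν < δ := fun ν hν => lt_of_le_of_lt (le_max_left _ _) (hδ3 ν hν)
  have hHcl : ∀ ν, ν < δ → H ν < δ := fun ν hν => lt_of_le_of_lt (le_max_right _ _) (hδ3 ν hν)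
  have hfδ : f δ < δ := hf δ hδpos hδ2
  have hfδω : f δ < omega1 := hfδ.trans hδ2
  exact absurd ((hH1 (f δ) hfδω).2 δ (hHcl (f δ) hfδ).le hδ2 hδpos hFcl) (lt_irrefl _)

/-! ### Finiteness of initial segments of the `C`s under `(⋆)` -/

lemma finite_Iio_nat : ∀ n : ℕ, (Set.Iio ((n : Ordinal.{0}))).Finite := by
  intro n
  induction n with
  | zero => convert Set.finite_empty; ext x; simp [not_lt_zero]
  | succ n ih =>
    have h : Set.Iio ((n + 1 : ℕ) : Ordinal.{0}) =
        insert (n : Ordinal.{0}) (Set.Iio ((n : Ordinal.{0}))) := by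
      ext x
      simp only [Set.mem_Iio, Set.mem_insert_iff]
      push_cast
      rw [Order.lt_add_one_iff, le_iff_lt_or_eq]
      tauto
    rw [h]
    exact ih.insert _

lemma finite_Iio_of_lt_omega0 {o : Ordinal.{0}} (h : o < Ordinal.omega0) :
    (Set.Iio o).Finite := by
  obtain ⟨n, rfl⟩ := Ordinal.lt_omega0.mp h
  exact finite_Iio_nat n

/-- Under `(⋆)`, each `C η` has order type `≤ ω`, hence `C η ∩ δ` is finite for `δ < η`. -/
lemma C_inter_finite {C : Ordinal.{0} → Set Ordinal.{0}} (hC : IsCSequence C)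
    (hstar : StarProperty C) {η δ : Ordinal.{0}} (hη : η < omega1) (hδ : δ < η) :
    (C η ∩ Set.Iio δ).Finite := by
  obtain ⟨f⟩ := hstar η hη
  set o := (Ordinal.cof η).ord with ho
  have holeω : o ≤ Ordinal.omega0 := by
    rw [ho, ← Cardinal.ord_aleph0]
    apply Cardinal.ord_le_ord.mpr
    refine le_trans (Ordinal.cof_le_card η) ?_
    have : η.card < Cardinal.aleph 1 := Cardinal.lt_ord.mp hη
    rwa [← Cardinal.succ_aleph0, Order.lt_succ_iff] at this
  obtain ⟨c, hc1, hc2⟩ := (hC η hη).2 δ hδ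
  set N : Ordinal.{0} := ↑(f ⟨c, hc1⟩) with hN
  have hNω : (N : Ordinal.{0}) < Ordinal.omega0 := lt_of_lt_of_le (f ⟨c, hc1⟩).2 holeω
  have hsub : C η ∩ Set.Iio δ ⊆
      (fun y : Set.Iio o => ((f.symm y : C η) : Ordinal.{0})) ''
        {y : Set.Iio o | (y : Ordinal.{0}) < N} := by
    rintro x ⟨hx1, hx2⟩
    refine ⟨f ⟨x, hx1⟩, ?_, by simp⟩
    have hxc : (⟨x, hx1⟩ : C η) < ⟨c, hc1⟩ := by
      simp only [Subtype.mk_lt_mk]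
      exact lt_of_lt_of_le hx2 hc2
    simpa [hN] using f.lt_iff_lt.mpr hxc
  apply Set.Finite.subset _ hsub
  apply Set.Finite.image
  have : {y : Set.Iio o | (y : Ordinal.{0}) < N} =
      (fun y : Set.Iio o => (y : Ordinal.{0})) ⁻¹' (Set.Iio (N : Ordinal.{0})) := rfl
  rw [this]
  exact Set.Finite.preimage (Set.injOn_of_injective Subtype.val_injective)
    (finite_Iio_of_lt_omega0 hNω)

/-! ### Walk lemmas -/

section Walk

variable {C : Ordinal.{0} → Set Ordinal.{0}} {Tr : Ordinal.{0} → Ordinal.{0} → Finset Ordinal.{0}}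
variable (hC : IsCSequence C) (hTr : IsUpperTrace C Tr)

include hC in
/-- Basic facts about the first step of the walk. -/
lemma step_facts {α β : Ordinal.{0}} (hαβ : α < β) (hβ : β < omega1) :
    sInf (C β \ Set.Iio α) ∈ C β ∧ α ≤ sInf (C β \ Set.Iio α) ∧ sInf (C β \ Set.Iio α) < β := by
  have hne : (C β \ Set.Iio α).Nonempty := by
    obtain ⟨η, hη1, hη2⟩ := (hC β hβ).2 α hαβ
    exact ⟨η, hη1, by simpa using hη2⟩
  have hmem := csInf_mem hne
  obtain ⟨h1, h2⟩ := hmem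
  exact ⟨h1, by simpa using h2, (hC β hβ).1 _ h1⟩

include hC hTr in
lemma trace_bounds : ∀ β, β < omega1 → ∀ α, α ≤ β → ∀ x ∈ Tr α β, α ≤ x ∧ x ≤ β := by
  intro β
  induction β using Ordinal.induction with
  | h β IH =>
    intro hβ α hαβ x hx
    rcases eq_or_lt_of_le hαβ with rfl | hlt
    · rw [hTr.1 α] at hx
      simp at hx
      simp [hx]
    · rw [hTr.2 α β hlt hβ] at hx
      obtain ⟨h1, h2, h3⟩ := step_facts hC hlt hβ
      rcases Finset.mem_insert.mp hx with rfl | hx'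
      · exact ⟨hlt.le, le_rfl⟩
      · obtain ⟨ha, hb⟩ := IH _ h3 (h3.trans hβ) α h2 x hx'
        exact ⟨ha, hb.trans h3.le⟩

include hC hTr in
lemma trace_card_pos {α β : Ordinal.{0}} (hαβ : α ≤ β) (hβ : β < omega1) :
    0 < (Tr α β).card := by
  rcases eq_or_lt_of_le hαβ with rfl | hlt
  · rw [hTr.1 α]; simp
  · rw [hTr.2 α β hlt hβ]
    exact Finset.card_pos.mpr (Finset.insert_nonempty _ _)

include hC hTr in
/-- Key decomposition: if no `C η` for `η` in the walk from `β` down to `δ`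
meets `[α, δ)`, then the walk from `β` to `α` passes through `δ`, hence is longer
than the walk from `δ` to `α`. -/
lemma lemA_s4 : ∀ β, β < omega1 → ∀ δ α, α ≤ δ → δ < β →
    (∀ η ∈ Tr δ β, δ < η → ∀ c ∈ C η, α ≤ c → δ ≤ c) →
    (Tr α δ).card + 1 ≤ (Tr α β).card := by
  intro β
  induction β using Ordinal.induction with
  | h β IH =>
    intro hβ δ α hαδ hδβ hcond
    set β₁ := sInf (C β \ Set.Iio δ) with hβ₁
    obtain ⟨hm1, hm2, hm3⟩ := step_facts hC hδβ hβ
    rw [← hβ₁] at hm1 hm2 hm3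
    have hαβ : α < β := lt_of_le_of_lt hαδ hδβ
    have hTδ : Tr δ β = insert β (Tr δ β₁) := hTr.2 δ β hδβ hβ
    have hβmem : β ∈ Tr δ β := by rw [hTδ]; exact Finset.mem_insert_self _ _
    have hsets : C β \ Set.Iio α = C β \ Set.Iio δ := by
      ext c
      simp only [Set.mem_diff, Set.mem_Iio, not_lt]
      constructor
      · rintro ⟨h1, h2⟩; exact ⟨h1, hcond β hβmem hδβ c h1 h2⟩
      · rintro ⟨h1, h2⟩; exact ⟨h1, hαδ.trans h2⟩
    have hTα : Tr α β = insert β (Tr α β₁) := by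
      have := hTr.2 α β hαβ hβ
      rwa [hsets] at this
    rcases eq_or_lt_of_le hm2 with heq | hlt
    · have hnotmem : β ∉ Tr α δ := by
        intro hmem
        exact absurd (trace_bounds hC hTr δ (hδβ.trans hβ) α hαδ β hmem).2 (not_le.mpr hδβ)
      rw [hTα, ← heq, Finset.card_insert_of_notMem hnotmem]
    · have hcond' : ∀ η ∈ Tr δ β₁, δ < η → ∀ c ∈ C η, α ≤ c → δ ≤ c := by
        intro η hη
        exact hcond η (by rw [hTδ]; exact Finset.mem_insert_of_mem hη)
      have := IH β₁ hm3 (hm3.trans hβ) δ α hαδ hlt hcond'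
      calc (Tr α δ).card + 1 ≤ (Tr α β₁).card := this
        _ ≤ (Tr α β).card := by
            rw [hTα]; exact Finset.card_le_card (Finset.subset_insert _ _)

include hC hTr in
/-- For `0 < δ ≤ β < ω₁` there is `ξ < δ` bounding all sets `C η ∩ δ`, `η ∈ Tr δ β`, `η > δ`. -/
lemma bound_exists (hstar : StarProperty C) {δ β : Ordinal.{0}} (hδpos : 0 < δ)
    (hδ : δ < omega1) (hβ : β < omega1) (hδβ : δ ≤ β) :
    ∃ ξ, ξ < δ ∧ ∀ η ∈ Tr δ β, δ < η → ∀ c ∈ C η, c < δ → c ≤ ξ := by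
  set U : Set Ordinal.{0} := {c | ∃ η ∈ Tr δ β, δ < η ∧ c ∈ C η ∧ c < δ} with hU
  have hUfin : U.Finite := by
    have hsub : U ⊆ ⋃ η ∈ {η : Ordinal.{0} | η ∈ Tr δ β ∧ δ < η}, (C η ∩ Set.Iio δ) := by
      rintro c ⟨η, h1, h2, h3, h4⟩
      exact Set.mem_biUnion ⟨h1, h2⟩ ⟨h3, h4⟩
    apply Set.Finite.subset _ hsub
    apply Set.Finite.biUnion
    · exact Set.Finite.subset (Tr δ β).finite_toSet (fun x hx => hx.1)
    · rintro η ⟨h1, h2⟩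
      have hηω : η < omega1 :=
        lt_of_le_of_lt (trace_bounds hC hTr β hβ δ hδβ η h1).2 hβ
      exact C_inter_finite hC hstar hηω h2
  rcases Set.eq_empty_or_nonempty U with hUe | hUne
  · refine ⟨0, hδpos, ?_⟩
    intro η h1 h2 c h3 h4
    exact absurd (show c ∈ U from ⟨η, h1, h2, h3, h4⟩) (by rw [hUe]; simp)
  · refine ⟨sSup U, ?_, ?_⟩
    · have hmem : sSup U ∈ U := Set.Nonempty.csSup_mem hUne hUfin
      obtain ⟨η, h1, h2, h3, h4⟩ := hmem
      exact h4
    · intro η h1 h2 c h3 h4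
      exact le_csSup hUfin.bddAbove ⟨η, h1, h2, h3, h4⟩

include hC hTr in
/-- The main auxiliary lemma, proved by induction on `ℓ`. -/
lemma aux_main (hstar : StarProperty C) :
    ∀ ℓ : ℕ, ∀ S : Set Ordinal.{0}, ∀ b g : Ordinal.{0} → Ordinal.{0},
    (∀ x ∈ S, x < omega1) →
    (∀ ξ, ξ < omega1 → ∃ η ∈ S, ξ ≤ η) →
    (∀ i ∈ S, b i < omega1 ∧ g i < omega1) →
    (∀ i ∈ S, ∀ j ∈ S, i < j → max (b i) (g i) < min (b j) (g j)) →
    (∀ i ∈ S, i ≤ b i ∧ i ≤ g i) →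
    ∃ Γ, Γ ⊆ S ∧ (∀ ξ, ξ < omega1 → ∃ η ∈ Γ, ξ ≤ η) ∧
      ∀ i ∈ Γ, ∀ j ∈ Γ, i < j → (ℓ : ℤ) < rho2 Tr (b i) (g j) := by
  intro ℓ
  induction ℓ with
  | zero =>
    intro S b g hS1 hS2 hbg hsep hlb
    refine ⟨S, Set.Subset.refl S, hS2, ?_⟩
    intro i hi j hj hij
    have hblt : b i ≤ g j :=
      le_of_lt (lt_of_le_of_lt (le_max_left _ _)
        ((hsep i hi j hj hij).trans_le (min_le_right _ _)))
    have hpos : 0 < (Tr (b i) (g j)).card := trace_card_pos hC hTr hblt (hbg j hj).2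
    show (0 : ℤ) < ((Tr (b i) (g j)).card : ℤ)
    exact_mod_cast hpos
  | succ ℓ IH =>
    intro S b g hS1 hS2 hbg hsep hlb
    -- an index of `S` above any countable ordinal
    have hJex : ∀ δ, δ < omega1 → ∃ i, i ∈ S ∧ δ < i := by
      intro δ hδ
      obtain ⟨η, hη1, hη2⟩ := hS2 (δ + 1) (succ_lt_omega1 hδ)
      exact ⟨η, hη1, lt_of_lt_of_le (Order.lt_add_one_iff.mpr le_rfl) hη2⟩
    set J : Ordinal.{0} → Ordinal.{0} :=
      fun δ => if h : δ < omega1 then (hJex δ h).choose else 0 with hJdef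
    have hJ : ∀ δ, δ < omega1 → J δ ∈ S ∧ δ < J δ := by
      intro δ h; rw [hJdef]; simp only [h, dif_pos]; exact (hJex δ h).choose_spec
    have hJb : ∀ δ, δ < omega1 → δ < b (J δ) ∧ δ < g (J δ) := fun δ h =>
      ⟨lt_of_lt_of_le (hJ δ h).2 (hlb _ (hJ δ h).1).1,
       lt_of_lt_of_le (hJ δ h).2 (hlb _ (hJ δ h).1).2⟩
    set F : Ordinal.{0} → Ordinal.{0} := fun δ => max (b (J δ)) (g (J δ)) with hFdef
    have hF : ∀ ν, ν < omega1 → F ν < omega1 := fun ν h =>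
      max_lt (hbg _ (hJ ν h).1).1 (hbg _ (hJ ν h).1).2
    -- the "pressing down" bound below each `δ`
    have hfex : ∀ δ, 0 < δ → δ < omega1 → ∃ ξ, ξ < δ ∧
        ∀ η ∈ Tr δ (g (J δ)), δ < η → ∀ c ∈ C η, c < δ → c ≤ ξ := by
      intro δ h0 h1
      exact bound_exists hC hTr hstar h0 h1 (hbg _ (hJ δ h1).1).2 (hJb δ h1).2.le
    set f : Ordinal.{0} → Ordinal.{0} :=
      fun δ => if h : 0 < δ ∧ δ < omega1 then (hfex δ h.1 h.2).choose else 0 with hfdef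
    have hf : ∀ δ, 0 < δ → δ < omega1 → f δ < δ ∧
        ∀ η ∈ Tr δ (g (J δ)), δ < η → ∀ c ∈ C η, c < δ → c ≤ f δ := by
      intro δ h0 h1
      rw [hfdef]
      simp only [h0, h1, and_true, true_and, dif_pos]
      exact (hfex δ h0 h1).choose_spec
    obtain ⟨ξ₀, hξ₀, hFod⟩ := fodorWeak F f hF (fun δ h0 h1 => (hf δ h0 h1).1)
    set S' : Set Ordinal.{0} :=
      {δ | ξ₀ < δ ∧ δ < omega1 ∧ (∀ ν, ν < δ → F ν < δ) ∧ f δ ≤ ξ₀} with hS'def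
    have hS'unb : ∀ ξ, ξ < omega1 → ∃ η ∈ S', ξ ≤ η := by
      intro ξ hξ
      have hm : max ξ (ξ₀ + 1) < omega1 := max_lt hξ (succ_lt_omega1 hξ₀)
      obtain ⟨δ, h1, h2, h3, h4, h5⟩ := hFod _ hm
      refine ⟨δ, ⟨?_, h2, h4, h5⟩, le_trans (le_max_left _ _) h1⟩
      exact lt_of_lt_of_le (Order.lt_add_one_iff.mpr le_rfl) (le_trans (le_max_right _ _) h1)
    -- apply the induction hypothesis to the derived family on `S'`
    have hsep' : ∀ i ∈ S', ∀ j ∈ S', i < j →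
        max (b (J i)) i < min (b (J j)) j := by
      intro i hi j hj hij
      have h1 : b (J i) < j := lt_of_le_of_lt (le_max_left (b (J i)) (g (J i))) (hj.2.2.1 i hij)
      have h2 : j < b (J j) := (hJb j hj.2.1).1
      exact max_lt (lt_min (h1.trans h2) h1) (lt_min (hij.trans h2) hij)
    have hlb' : ∀ i ∈ S', i ≤ b (J i) ∧ i ≤ i := by
      intro i hi
      exact ⟨(hJb i hi.2.1).1.le, le_rfl⟩
    obtain ⟨Γ', hΓ'sub, hΓ'unb, hΓ'⟩ := IH S' (fun δ => b (J δ)) (fun δ => δ)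
      (fun x hx => hx.2.1) hS'unb
      (fun i hi => ⟨(hbg _ (hJ i hi.2.1).1).1, hi.2.1⟩)
      hsep' hlb'
    refine ⟨(fun δ => J δ) '' Γ', ?_, ?_, ?_⟩
    · rintro _ ⟨δ, hδ, rfl⟩
      exact (hJ δ (hΓ'sub hδ).2.1).1
    · intro ξ hξ
      obtain ⟨δ, hδ, hle⟩ := hΓ'unb ξ hξ
      exact ⟨J δ, ⟨δ, hδ, rfl⟩, hle.trans (hJ δ (hΓ'sub hδ).2.1).2.le⟩
    · rintro _ ⟨δ, hδ, rfl⟩ _ ⟨δ', hδ', rfl⟩ hlt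
      have hδS' := hΓ'sub hδ
      have hδ'S' := hΓ'sub hδ'
      have hδω : δ < omega1 := hδS'.2.1
      have hδ'ω : δ' < omega1 := hδ'S'.2.1
      have hδδ' : δ < δ' := by
        rcases lt_trichotomy δ δ' with h | h | h
        · exact h
        · exact absurd hlt (by rw [h]; exact lt_irrefl _)
        · exfalso
          have hJJ : J δ' < J δ := by
            have hb' : b (J δ') < δ :=
              lt_of_le_of_lt (le_max_left (b (J δ')) (g (J δ'))) (hδS'.2.2.1 δ' h)
            exact lt_of_le_of_lt (hlb _ (hJ δ' hδ'ω).1).1 (hb'.trans (hJ δ hδω).2)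
          exact absurd hlt (not_lt.mpr hJJ.le)
      have hIH : (ℓ : ℤ) < rho2 Tr (b (J δ)) δ' := hΓ' δ hδ δ' hδ' hδδ'
      have hα : b (J δ) < δ' :=
        lt_of_le_of_lt (le_max_left (b (J δ)) (g (J δ))) (hδ'S'.2.2.1 δ hδδ')
      have hβω : g (J δ') < omega1 := (hbg _ (hJ δ' hδ'ω).1).2
      have hδ'β : δ' < g (J δ') := (hJb δ' hδ'ω).2
      have hδ'pos : 0 < δ' := lt_of_le_of_lt (zero_le (a := ξ₀)) hδ'S'.1
      have hcond : ∀ η ∈ Tr δ' (g (J δ')), δ' < η → ∀ c ∈ C η, b (J δ) ≤ c → δ' ≤ c := by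
        intro η hη hδ'η c hc hbc
        by_contra hcon
        push_neg at hcon
        have hcf : c ≤ f δ' := (hf δ' hδ'pos hδ'ω).2 η hη hδ'η c hc hcon
        have hcb : c < b (J δ) :=
          lt_of_le_of_lt (hcf.trans hδ'S'.2.2.2) (hδS'.1.trans (hJb δ hδω).1)
        exact absurd hbc (not_le.mpr hcb)
      have hkey : (Tr (b (J δ)) δ').card + 1 ≤ (Tr (b (J δ)) (g (J δ'))).card :=
        lemA_s4 hC hTr (g (J δ')) hβω δ' (b (J δ)) hα.le hδ'β hcond
      have h1 : ℓ < (Tr (b (J δ)) δ').card := by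
        have hIH' : (ℓ : ℤ) < ((Tr (b (J δ)) δ').card : ℤ) := hIH
        exact_mod_cast hIH'
      have h2 : ℓ + 1 < (Tr (b (J δ)) (g (J δ'))).card :=
        lt_of_lt_of_le (Nat.add_lt_add_right h1 1) hkey
      show ((ℓ + 1 : ℕ) : ℤ) < ((Tr (b (J δ)) (g (J δ'))).card : ℤ)
      exact_mod_cast h2

end Walk

/-- Claim: given pairwise separated pairs `(β i, γ i)` (`i < ω₁`) from `ω₁ × ω₁`,
for every `ℓ ∈ ℕ` there is a cofinal `Γ ⊆ ω₁` with `ρ₂(β i, γ j) > ℓ` for all `i < j` in `Γ`. -/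
theorem statement4 (C : Ordinal → Set Ordinal) (hC : IsCSequence C) (hstar : StarProperty C)
    (Tr : Ordinal → Ordinal → Finset Ordinal) (hTr : IsUpperTrace C Tr)
    (b g : Ordinal → Ordinal)
    (hmem : ∀ i, i < omega1 → b i < omega1 ∧ g i < omega1)
    (hsep : ∀ i j, i < j → j < omega1 → max (b i) (g i) < min (b j) (g j)) :
    ∀ ℓ : ℕ, ∃ Γ : Set Ordinal, (∀ x ∈ Γ, x < omega1) ∧
      (∀ ξ, ξ < omega1 → ∃ η ∈ Γ, ξ ≤ η) ∧
      ∀ i ∈ Γ, ∀ j ∈ Γ, i < j → (ℓ : ℤ) < rho2 Tr (b i) (g j) := by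
  have hlb : ∀ i ∈ Set.Iio omega1, i ≤ b i ∧ i ≤ g i := by
    have key : ∀ i, i < omega1 → i ≤ b i ∧ i ≤ g i := by
      intro i
      induction i using Ordinal.induction with
      | h i IHi =>
        intro hi
        have hmin : ∀ k, k < i → k < min (b i) (g i) := by
          intro k hk
          have hk1 : k < omega1 := hk.trans hi
          have hs := hsep k i hk hi
          have hkb := (IHi k hk hk1).1
          exact lt_of_le_of_lt (le_trans hkb (le_max_left _ _)) hs
        have h1 : i ≤ min (b i) (g i) := by
          by_contra hcon
          push_neg at hcon
          exact absurd (hmin _ hcon) (lt_irrefl _)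
        exact ⟨h1.trans (min_le_left _ _), h1.trans (min_le_right _ _)⟩
    exact fun i hi => key i hi
  intro ℓ
  obtain ⟨Γ, h1, h2, h3⟩ := aux_main hC hTr hstar ℓ (Set.Iio omega1) b g
    (fun x hx => hx)
    (fun ξ hξ => ⟨ξ, hξ, le_rfl⟩)
    (fun i hi => hmem i hi)
    (fun i hi j hj hij => hsep i j hij hj)
    hlb
  exact ⟨Γ, fun x hx => h1 hx, h2, h3⟩
end
end

section
/- Fix a C-sequence ⟨C_α | α < ω₁⟩ on ω₁ satisfying (⋆). Then for all α < β < γ < ω₁, if maxL(β,γ) < α then β ∈ Tr(α,γ) and Tr(α,γ) = Tr(α,β) ∪ Tr(β,γ). -/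
noncomputable section
open Ordinal Set

/-- The maximum of the lower trace: `maxL (α, β) = max {max (C ξ ∩ α) | ξ ∈ Tr (α, β) \ {α}}`,
with the convention `max ∅ = 0`. -/

def maxL (C : Ordinal.{0} → Set Ordinal.{0})
    (Tr : Ordinal.{0} → Ordinal.{0} → Finset Ordinal.{0}) (α β : Ordinal.{0}) : Ordinal.{0} :=
  sSup {o : Ordinal | ∃ ξ ∈ Tr α β, ξ ≠ α ∧ o = sSup (C ξ ∩ Set.Iio α)}


lemma bddAbove_maxLset (Tr : Ordinal.{0} → Ordinal.{0} → Finset Ordinal.{0})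
    (C : Ordinal.{0} → Set Ordinal.{0}) (α β : Ordinal.{0}) :
    BddAbove {o : Ordinal | ∃ ξ ∈ Tr α β, ξ ≠ α ∧ o = sSup (C ξ ∩ Set.Iio α)} := by
  apply Set.Finite.bddAbove
  apply Set.Finite.subset ((Tr α β).finite_toSet.image (fun ξ => sSup (C ξ ∩ Set.Iio α)))
  rintro o ⟨ξ, hξ, -, rfl⟩
  exact ⟨ξ, hξ, rfl⟩

/-- For a C-sequence on ω₁ satisfying (⋆): if `maxL (β, γ) < α` for `α < β < γ < ω₁`, then
`β ∈ Tr (α, γ)` and `Tr (α, γ) = Tr (α, β) ∪ Tr (β, γ)`. -/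
theorem statement8 (C : Ordinal → Set Ordinal) (hC : IsCSequence C) (hstar : StarProperty C)
    (Tr : Ordinal → Ordinal → Finset Ordinal) (hTr : IsUpperTrace C Tr) :
    ∀ α β γ, α < β → β < γ → γ < omega1 → maxL C Tr β γ < α →
      β ∈ Tr α γ ∧ Tr α γ = Tr α β ∪ Tr β γ := by
  intro α β γ
  induction γ using Ordinal.induction with
  | h γ IH =>
  intro hab hbg hg1 hmax
  have hag : α < γ := hab.trans hbg
  have hγC := hC γ hg1
  have hne : (C γ \ Set.Iio β).Nonempty := by
    obtain ⟨η, hη, hβη⟩ := hγC.2 β hbg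
    exact ⟨η, hη, not_lt.2 hβη⟩
  set γ' := sInf (C γ \ Set.Iio β) with hγ'def
  have hγ'mem : γ' ∈ C γ \ Set.Iio β := csInf_mem hne
  have hγ'lt : γ' < γ := hγC.1 γ' hγ'mem.1
  have hβγ' : β ≤ γ' := not_lt.1 hγ'mem.2
  have hγ'1 : γ' < omega1 := hγ'lt.trans hg1
  have hTrβγ : Tr β γ = insert γ (Tr β γ') := hTr.2 β γ hbg hg1
  have hsupγ : sSup (C γ ∩ Set.Iio β) < α := by
    refine lt_of_le_of_lt ?_ hmax
    apply le_csSup (bddAbove_maxLset Tr C β γ)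
    exact ⟨γ, by simp [hTrβγ], hbg.ne', rfl⟩
  have hdiff : C γ \ Set.Iio α = C γ \ Set.Iio β := by
    apply Set.eq_of_subset_of_subset
    · rintro x ⟨hx, hxα⟩
      refine ⟨hx, fun hxβ => hxα ?_⟩
      have hxle : x ≤ sSup (C γ ∩ Set.Iio β) :=
        le_csSup ⟨β, fun y hy => hy.2.le⟩ ⟨hx, hxβ⟩
      exact hxle.trans_lt hsupγ
    · rintro x ⟨hx, hxβ⟩
      exact ⟨hx, fun hxα => hxβ (hxα.trans hab)⟩
  have hTrαγ : Tr α γ = insert γ (Tr α γ') := by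
    have h := hTr.2 α γ hag hg1
    rwa [hdiff] at h
  have hβTr : β ∈ Tr α β := by
    rw [hTr.2 α β hab (hbg.trans hg1)]
    exact Finset.mem_insert_self _ _
  rcases eq_or_lt_of_le hβγ' with heq | hlt
  · constructor
    · rw [hTrαγ, ← heq]
      exact Finset.mem_insert_of_mem hβTr
    · rw [hTrαγ, hTrβγ, ← heq, hTr.1 β]
      ext x
      simp only [Finset.mem_insert, Finset.mem_union, Finset.mem_singleton]
      constructor
      · rintro (rfl | h) <;> tauto
      · rintro (h | (rfl | rfl)) <;> tauto
  · have hmax' : maxL C Tr β γ' < α := by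
      refine lt_of_le_of_lt ?_ hmax
      unfold maxL
      apply csSup_le_csSup (bddAbove_maxLset Tr C β γ)
      · exact ⟨sSup (C γ' ∩ Set.Iio β), γ',
          by rw [hTr.2 β γ' hlt hγ'1]; exact Finset.mem_insert_self _ _, hlt.ne', rfl⟩
      · rintro o ⟨ξ, hξ, hξβ, rfl⟩
        exact ⟨ξ, by rw [hTrβγ]; exact Finset.mem_insert_of_mem hξ, hξβ, rfl⟩
    obtain ⟨hβmem, hTreq⟩ := IH γ' hγ'lt hab hlt hγ'1 hmax'
    constructor
    · rw [hTrαγ]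
      exact Finset.mem_insert_of_mem hβmem
    · rw [hTrαγ, hTrβγ, hTreq]
      ext x
      simp only [Finset.mem_insert, Finset.mem_union]
      tauto
end
end
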